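/- arXiv:1909.09997 — 2 statements merged into one kernel-verified Lean document; each statement's English description precedes it below -/
import Mathlib

section
/- Let ι : H ↪ G be a closed subgroup, M_H a Cartesian cohomology functor for (H, Σ∩H), M_G a Cartesian cohomology functor for (G, Σ), and ι_⋆ : M_H → M_G a pushforward map. Fix u ∈ G, a compact subgroup K ⊆ H, and z ∈ M_{H,Iw}(K). For an open compact subgroup U ⊆ Σ with uUu⁻¹ ⊆ Σ and [K : K ∩ uUu⁻¹] finite, let z_U ∈ M_G(U) denote the image of z under the composite of: the finite pullback M_{H,Iw}(K) → M_{H,Iw}(K ∩ uUu⁻¹), the pushforward M_{H,Iw}(K ∩ uUu⁻¹) → M_{H,Iw}(H ∩ uUu⁻¹), the map ι_{uUu⁻¹,⋆} : M_{H,Iw}(H ∩ uUu⁻¹) → M_G(uUu⁻¹), and the conjugation isomorphism [u]_⋆ : M_G(uUu⁻¹) → M_G(U). Now let U'' ⊆ U' ⊆ U be three such open compact subgroups and suppose: (i) K ∩ uU''u⁻¹ = K ∩ uU'u⁻¹; (ii) there is a finite set R ⊆ (u⁻¹Ku) ∩ U with U = ⨆_{γ ∈ R} U'γ, and [K ∩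 uUu⁻¹ : K ∩ uU'u⁻¹] = [U : U']. Then pr_{U'', U', ⋆}(z_{U''}) = pr^⋆_{U', U}(z_{U'}) in M_G(U'). Consequently, if moreover τ ∈ Σ⁻¹ satisfies U' = U ∩ τUτ⁻¹ and τ⁻¹U''τ ⊆ U, then [τ]_{U'', U, ⋆}(z_{U''}) = T_U(z_U), where T_U = pr_{τ⁻¹U'τ, U, ⋆} ∘ [τ]_{U', τ⁻¹U'τ, ⋆} ∘ pr^⋆_{U', U} is the Hecke operator of the double coset U τ⁻¹ U. -/
/-- The conjugate subgroup `γ U γ⁻¹`. -/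
def conjSub {G : Type*} [Group G] (γ : G) (U : Subgroup G) : Subgroup G :=
  U.map (MulAut.conj γ).toMonoidHom

/-- A *cohomology functor* for a group `G`, with objects the subgroups satisfying the
predicate `P` (in practice: the open compact subgroups contained in an open submonoid `Σ`),
monoid of admissible twists `S` (in practice `Σ`), and coefficients in a commutative
ring `A`.  It consists of `A`-modules `M U`, contravariant pullback maps
`pull g U V : M V →ₗ M U` (for the morphism `[g] : U → V` of `𝒫(G, Σ)`, i.e. `g ∈ S` and
`g⁻¹ U g ⊆ V`) and covariant pushforward maps `push g U V : M U →ₗ M V` (for the morphism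
`[g] : U → V` of `𝒫(G, Σ⁻¹)`, i.e. `g⁻¹ ∈ S` and `g⁻¹ U g ⊆ V`), which are functorial,
depend only on the double coset `U g V`, and satisfy `[g]^⋆ = [g⁻¹]_⋆` when
`g⁻¹ U g = V`. -/
structure CohFunctor (G : Type*) [Group G] (P : Subgroup G → Prop) (S : Set G)
    (A : Type*) [CommRing A] where
  M : Subgroup G → Type*
  addCommGroup : ∀ U, AddCommGroup (M U)
  module : ∀ U, Module A (M U)
  pull : ∀ (g : G) (U V : Subgroup G), M V →ₗ[A] M U
  push : ∀ (g : G) (U V : Subgroup G), M U →ₗ[A] M V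
  pull_id : ∀ U, P U → pull 1 U U = LinearMap.id
  push_id : ∀ U, P U → push 1 U U = LinearMap.id
  pull_comp : ∀ (g h : G) (U V W : Subgroup G), P U → P V → P W →
    g ∈ S → h ∈ S → (∀ x ∈ U, g⁻¹ * x * g ∈ V) → (∀ x ∈ V, h⁻¹ * x * h ∈ W) →
    (pull g U V).comp (pull h V W) = pull (g * h) U W
  push_comp : ∀ (g h : G) (U V W : Subgroup G), P U → P V → P W →
    g⁻¹ ∈ S → h⁻¹ ∈ S → (∀ x ∈ U, g⁻¹ * x * g ∈ V) → (∀ x ∈ V, h⁻¹ * x * h ∈ W) →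
    (push h V W).comp (push g U V) = push (g * h) U W
  pull_congr : ∀ (g u v : G) (U V : Subgroup G), P U → P V → g ∈ S →
    (∀ x ∈ U, g⁻¹ * x * g ∈ V) → u ∈ U → v ∈ V → pull (u * g * v) U V = pull g U V
  push_congr : ∀ (g u v : G) (U V : Subgroup G), P U → P V → g⁻¹ ∈ S →
    (∀ x ∈ U, g⁻¹ * x * g ∈ V) → u ∈ U → v ∈ V → push (u * g * v) U V = push g U V
  pull_eq_push : ∀ (g : G) (U V : Subgroup G), P U → P V → g ∈ S →
    conjSub g⁻¹ U = V → pull g U V = push g⁻¹ V U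

attribute [instance] CohFunctor.addCommGroup CohFunctor.module

namespace CohFunctor

variable {G : Type*} [Group G] {P : Subgroup G → Prop} {S : Set G}
  {A : Type*} [CommRing A]

/-- The Cartesian (Mackey) condition: for objects `U, U' ≤ V` and any finite set `R` of
representatives of the double cosets `U\V/U'`, the composite `pr^⋆_{U,V} ∘ pr_{U',V,⋆}`
equals the sum over `γ ∈ R` of `pr_{U_γ,U,⋆} ∘ [γ]^⋆` with `U_γ = γU'γ⁻¹ ∩ U`. -/
def IsCartesian (F : CohFunctor G P S A) : Prop :=
  ∀ (U U' V : Subgroup G), P U → P U' → P V → U ≤ V → U' ≤ V →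
    ∀ R : Finset G, (↑R : Set G) ⊆ (V : Set G) →
      (∀ v ∈ V, ∃ γ ∈ R, ∃ x ∈ U, ∃ y ∈ U', v = x * γ * y) →
      (∀ γ ∈ R, ∀ γ' ∈ R, (∃ x ∈ U, ∃ y ∈ U', γ' = x * γ * y) → γ = γ') →
      (F.pull 1 U V).comp (F.push 1 U' V) =
        ∑ γ ∈ R, (F.push 1 (conjSub γ U' ⊓ U) U).comp (F.pull γ (conjSub γ U' ⊓ U) U')

/-- The Iwasawa completion `M_Iw(K) = lim_U M(U)`, the inverse limit over the objects `U`
containing the compact subgroup `K`, with respect to the pushforward maps `pr_⋆`. -/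
def Iw (F : CohFunctor G P S A) (K : Subgroup G) :
    Submodule A (∀ U : {U : Subgroup G // P U ∧ K ≤ U}, F.M U.1) where
  carrier := {f | ∀ (U V : {U : Subgroup G // P U ∧ K ≤ U}), U.1 ≤ V.1 →
      F.push 1 U.1 V.1 (f U) = f V}
  add_mem' := by
    intro f g hf hg U V h
    simp only [Pi.add_apply, map_add, hf U V h, hg U V h]
  zero_mem' := by
    intro U V h
    simp
  smul_mem' := by
    intro c f hf U V h
    simp only [Pi.smul_apply, map_smul, hf U V h]

/-- Projection from the Iwasawa completion at `K` to the value at an object `U ⊇ K`. -/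
def IwProj (F : CohFunctor G P S A) (K U : Subgroup G) (hU : P U) (hKU : K ≤ U) :
    F.Iw K →ₗ[A] F.M U :=
  (LinearMap.proj (⟨U, hU, hKU⟩ : {U : Subgroup G // P U ∧ K ≤ U})).comp (F.Iw K).subtype

/-- The pushforward `pr_⋆ : M_Iw(K₁) → M_Iw(K₂)` on Iwasawa completions, for compact
subgroups `K₁ ≤ K₂` (restriction of compatible families). -/
def IwRes (F : CohFunctor G P S A) (K₁ K₂ : Subgroup G) (h : K₁ ≤ K₂) :
    F.Iw K₁ →ₗ[A] F.Iw K₂ where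
  toFun f := ⟨fun U => f.1 ⟨U.1, U.2.1, le_trans h U.2.2⟩, fun U V hUV =>
    f.2 ⟨U.1, U.2.1, le_trans h U.2.2⟩ ⟨V.1, V.2.1, le_trans h V.2.2⟩ hUV⟩
  map_add' f g := rfl
  map_smul' c f := rfl

end CohFunctor

/-- The Hecke operator `T_U = pr_{τ⁻¹U'τ, U, ⋆} ∘ [τ]_{U', τ⁻¹U'τ, ⋆} ∘ pr^⋆_{U', U}` on
`M(U)`, where `U' = U ∩ τUτ⁻¹`; it is the operator of the double coset `U τ⁻¹ U`. -/
def heckeT {G : Type*} [Group G] {P : Subgroup G → Prop} {S : Set G}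
    {A : Type*} [CommRing A] (F : CohFunctor G P S A) (τ : G) (U : Subgroup G) :
    F.M U →ₗ[A] F.M U :=
  (F.push 1 (conjSub τ⁻¹ (U ⊓ conjSub τ U)) U).comp
    ((F.push τ (U ⊓ conjSub τ U) (conjSub τ⁻¹ (U ⊓ conjSub τ U))).comp
      (F.pull 1 (U ⊓ conjSub τ U) U))

/-- The defining property of the finite pullback `pr^⋆ : M_Iw(K) → M_Iw(K')` (for `K' ≤ K`
compact of finite index), as in Statement 1: it is compatible with the finite-level
pullbacks `pr^⋆_{V',V}` for all shrinking pairs `(V, V')` adapted to `(K, K')`. -/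
def IwFinPullSpec {G : Type*} [Group G] {P : Subgroup G → Prop} {S : Set G}
    {A : Type*} [CommRing A] (F : CohFunctor G P S A) (K K' : Subgroup G)
    (fp : F.Iw K →ₗ[A] F.Iw K') : Prop :=
  ∀ (V V' : Subgroup G) (hV : P V) (hV' : P V') (hKV : K ≤ V) (hK'V' : K' ≤ V'),
    V' ≤ V → V' ⊓ K = K' → V'.relIndex V = K'.relIndex K →
    ∀ f : F.Iw K, (fp f).1 ⟨V', hV', hK'V'⟩ = F.pull 1 V' V (f.1 ⟨V, hV, hKV⟩)

/-- A *pushforward map* `ι_⋆ : M_H → M_G` attached to the closed subgroup `Hsub ⊆ G`: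
a family of `A`-linear maps `ι_{V,⋆} : M_H(H ∩ V) → M_G(V)` for the objects `V` of
`𝒫(G, Σ)`, compatible with the pushforwards `[h]_⋆` for `h ∈ H ∩ Σ⁻¹`, and satisfying
the Cartesian (Mackey) compatibility with pullbacks along the double cosets
`U\V/(V ∩ H)`. -/
structure PushMap {G : Type*} [Group G] {PH PG : Subgroup G → Prop} {SH SG : Set G}
    {A : Type*} [CommRing A] (Hsub : Subgroup G)
    (FH : CohFunctor G PH SH A) (FG : CohFunctor G PG SG A) where
  toFun : ∀ V : Subgroup G, FH.M (Hsub ⊓ V) →ₗ[A] FG.M V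
  compat_push : ∀ h : G, h ∈ Hsub → h⁻¹ ∈ SG → h⁻¹ ∈ SH →
    ∀ V V' : Subgroup G, PG V → PG V' → (∀ x ∈ V, h⁻¹ * x * h ∈ V') →
      (FG.push h V V').comp (toFun V) =
        (toFun V').comp (FH.push h (Hsub ⊓ V) (Hsub ⊓ V'))
  compat_pull : ∀ U V : Subgroup G, PG U → PG V → U ≤ V →
    ∀ R : Finset G, (↑R : Set G) ⊆ (V : Set G) →
      (∀ v ∈ V, ∃ γ ∈ R, ∃ x ∈ U, ∃ h, h ∈ Hsub ∧ h ∈ V ∧ v = x * γ * h) →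
      (∀ γ ∈ R, ∀ γ' ∈ R, (∃ x ∈ U, ∃ h, h ∈ Hsub ∧ h ∈ V ∧ γ' = x * γ * h) → γ = γ') →
      (FG.pull 1 U V).comp (toFun V) =
        ∑ γ ∈ R, ((FG.push γ⁻¹ (conjSub γ⁻¹ U ⊓ V) U).comp
          ((toFun (conjSub γ⁻¹ U ⊓ V)).comp
            (FH.pull 1 (Hsub ⊓ (conjSub γ⁻¹ U ⊓ V)) (Hsub ⊓ V))))

/-- The class `z_U ∈ M_G(U)`: the image of `z ∈ M_{H,Iw}(K)` under the composite of the
finite pullback `M_{H,Iw}(K) → M_{H,Iw}(K ∩ uUu⁻¹)`, the pushforward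
`M_{H,Iw}(K ∩ uUu⁻¹) → M_{H,Iw}(H ∩ uUu⁻¹)`, the pushforward map
`ι_{uUu⁻¹,⋆} : M_{H,Iw}(H ∩ uUu⁻¹) → M_G(uUu⁻¹)`, and the conjugation isomorphism
`[u]_⋆ : M_G(uUu⁻¹) → M_G(U)`. -/
def pushClass {G : Type*} [Group G] {PH PG : Subgroup G → Prop} {SH SG : Set G}
    {A : Type*} [CommRing A] {Hsub : Subgroup G}
    {FH : CohFunctor G PH SH A} {FG : CohFunctor G PG SG A}
    (ι : PushMap Hsub FH FG) (u : G) (K U : Subgroup G)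
    (hX : PH (Hsub ⊓ conjSub u U))
    (hKX : K ⊓ conjSub u U ≤ Hsub ⊓ conjSub u U)
    (fp : FH.Iw K →ₗ[A] FH.Iw (K ⊓ conjSub u U)) (z : FH.Iw K) : FG.M U :=
  FG.push u (conjSub u U) U
    (ι.toFun (conjSub u U)
      (FH.IwProj (Hsub ⊓ conjSub u U) (Hsub ⊓ conjSub u U) hX le_rfl
        (FH.IwRes (K ⊓ conjSub u U) (Hsub ⊓ conjSub u U) hKX (fp z))))

namespace Aux8

variable {G : Type*} [Group G]

theorem mem_conjSub {γ x : G} {U : Subgroup G} : x ∈ conjSub γ U ↔ γ⁻¹ * x * γ ∈ U := by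
  simp only [conjSub, Subgroup.mem_map, MulEquiv.coe_toMonoidHom, MulAut.conj_apply]
  constructor
  · rintro ⟨y, hy, rfl⟩
    have h : γ⁻¹ * (γ * y * γ⁻¹) * γ = y := by group
    rwa [h]
  · intro h
    exact ⟨γ⁻¹ * x * γ, h, by group⟩

theorem conjSub_one (U : Subgroup G) : conjSub 1 U = U := by
  ext x; simp [mem_conjSub]

theorem conjSub_mono {γ : G} {U V : Subgroup G} (h : U ≤ V) : conjSub γ U ≤ conjSub γ V :=
  fun _ hx => mem_conjSub.mpr (h (mem_conjSub.mp hx))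

theorem conjSub_coe (γ : G) (U : Subgroup G) :
    (conjSub γ U : Set G) = (fun x => γ * x * γ⁻¹) '' (U : Set G) := by
  ext x
  simp only [SetLike.mem_coe, mem_conjSub, Set.mem_image, SetLike.mem_coe]
  constructor
  · intro h; exact ⟨_, h, by group⟩
  · rintro ⟨y, hy, rfl⟩
    have h : γ⁻¹ * (γ * y * γ⁻¹) * γ = y := by group
    rwa [h]

theorem conjSub_coe_preimage (γ : G) (U : Subgroup G) :
    (conjSub γ U : Set G) = (fun x => γ⁻¹ * x * γ) ⁻¹' (U : Set G) := by
  ext x; simp [mem_conjSub]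

theorem isOpen_conjSub [TopologicalSpace G] [IsTopologicalGroup G] {U : Subgroup G}
    (h : IsOpen (U : Set G)) (γ : G) : IsOpen (conjSub γ U : Set G) := by
  rw [conjSub_coe_preimage]
  exact h.preimage (by continuity)

theorem isCompact_conjSub [TopologicalSpace G] [IsTopologicalGroup G] {U : Subgroup G}
    (h : IsCompact (U : Set G)) (γ : G) : IsCompact (conjSub γ U : Set G) := by
  rw [conjSub_coe]
  exact h.image (by continuity)

theorem relIndex_eq_of_mul {K A V : Subgroup G} (hKV : K ≤ V) (hAV : A ≤ V)
    (hgen : ∀ v ∈ V, ∃ k ∈ K, ∃ a ∈ A, v = k * a) :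
    A.relIndex V = (A ⊓ K).relIndex K := by
  unfold Subgroup.relIndex
  rw [Subgroup.index_eq_card, Subgroup.index_eq_card]
  have hresp : ∀ a b : K, (QuotientGroup.leftRel ((A ⊓ K).subgroupOf K)) a b →
      (QuotientGroup.leftRel (A.subgroupOf V)) (⟨a.1, hKV a.2⟩ : V) ⟨b.1, hKV b.2⟩ := by
    intro a b hab
    rw [QuotientGroup.leftRel_apply] at hab ⊢
    have h1 : (a : G)⁻¹ * (b : G) ∈ A := by
      simpa [Subgroup.mem_subgroupOf, Subgroup.mem_inf] using hab
    exact Subgroup.mem_subgroupOf.mpr (by simpa using h1)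
  let f : K ⧸ (A ⊓ K).subgroupOf K → V ⧸ A.subgroupOf V :=
    Quotient.map' (fun k => (⟨k.1, hKV k.2⟩ : V)) hresp
  have hbij : Function.Bijective f := by
    constructor
    · intro q₁ q₂ h
      induction q₁ using Quotient.inductionOn' with
      | h a =>
      induction q₂ using Quotient.inductionOn' with
      | h b =>
      have h' := Quotient.exact' (s₁ := QuotientGroup.leftRel (A.subgroupOf V)) h
      rw [QuotientGroup.leftRel_apply] at h'
      apply Quotient.sound'
      rw [QuotientGroup.leftRel_apply]
      have h1 : (a : G)⁻¹ * b ∈ A := by simpa [Subgroup.mem_subgroupOf] using h'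
      exact Subgroup.mem_subgroupOf.mpr (Subgroup.mem_inf.mpr ⟨h1, mul_mem (inv_mem a.2) b.2⟩)
    · intro q
      induction q using Quotient.inductionOn' with
      | h v =>
      obtain ⟨k, hk, a, ha, hva⟩ := hgen v.1 v.2
      refine ⟨Quotient.mk'' ⟨k, hk⟩, ?_⟩
      show Quotient.mk'' _ = _
      apply Quotient.sound'
      rw [QuotientGroup.leftRel_apply]
      apply Subgroup.mem_subgroupOf.mpr
      have heq : k⁻¹ * (v : G) = a := by rw [hva]; group
      simpa [heq] using ha
  exact (Nat.card_congr (Equiv.ofBijective f hbij)).symm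

/-- The subgroup `K · N` when `K` normalizes `N`. -/
def mulKN (K N : Subgroup G) (h : ∀ k ∈ K, ∀ n ∈ N, k * n * k⁻¹ ∈ N) : Subgroup G where
  carrier := {x | ∃ k ∈ K, ∃ n ∈ N, x = k * n}
  one_mem' := ⟨1, K.one_mem, 1, N.one_mem, by simp⟩
  mul_mem' := by
    rintro x y ⟨k₁, hk₁, n₁, hn₁, rfl⟩ ⟨k₂, hk₂, n₂, hn₂, rfl⟩
    exact ⟨k₁ * k₂, mul_mem hk₁ hk₂, (k₂⁻¹ * n₁ * k₂) * n₂,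
      mul_mem (by simpa using h k₂⁻¹ (inv_mem hk₂) n₁ hn₁) hn₂, by group⟩
  inv_mem' := by
    rintro x ⟨k, hk, n, hn, rfl⟩
    exact ⟨k⁻¹, inv_mem hk, k * n⁻¹ * k⁻¹, h k hk n⁻¹ (inv_mem hn), by group⟩

theorem mem_mulKN {K N : Subgroup G} {h} {x : G} :
    x ∈ mulKN K N h ↔ ∃ k ∈ K, ∃ n ∈ N, x = k * n := Iff.rfl

theorem exists_conj_stable {G : Type*} [Group G] [TopologicalSpace G] [IsTopologicalGroup G]
    [T2Space G] [TotallyDisconnectedSpace G]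
    (K C : Subgroup G) (hK : IsCompact (K : Set G)) (hCo : IsOpen (C : Set G))
    (hCc : IsCompact (C : Set G)) :
    ∃ N : Subgroup G, IsOpen (N : Set G) ∧ IsCompact (N : Set G) ∧ N ≤ C ∧
      ∀ k ∈ K, ∀ n ∈ N, k * n * k⁻¹ ∈ N := by
  classical
  have hcont : Continuous fun p : G × G => p.1 * p.2 * p.1⁻¹ := by continuity
  have hT : IsOpen ((fun p : G × G => p.1 * p.2 * p.1⁻¹) ⁻¹' (C : Set G)) :=
    hCo.preimage hcont
  have hpt : ∀ k : G, k ∈ K → ∃ O P : Set G, IsOpen O ∧ IsOpen P ∧ k ∈ O ∧ (1 : G) ∈ P ∧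
      ∀ a ∈ O, ∀ b ∈ P, a * b * a⁻¹ ∈ C := by
    intro k _
    have hmem : (k, (1 : G)) ∈ (fun p : G × G => p.1 * p.2 * p.1⁻¹) ⁻¹' (C : Set G) := by
      simp [C.one_mem]
    rcases isOpen_prod_iff.mp hT k 1 hmem with ⟨O, P, hO, hP, hkO, h1P, hOP⟩
    exact ⟨O, P, hO, hP, hkO, h1P, fun a ha b hb => hOP (Set.mk_mem_prod ha hb)⟩
  choose O P hOopen hPopen hkO h1P hOP using hpt
  obtain ⟨t, ht⟩ := hK.elim_finite_subcover (fun k : ↥K => O k.1 k.2)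
      (fun k => hOopen k.1 k.2) (fun x hx => Set.mem_iUnion.mpr ⟨⟨x, hx⟩, hkO x hx⟩)
  set P₀ : Set G := ⋂ i ∈ t, P i.1 i.2 with hP₀def
  have hP₀o : IsOpen P₀ := isOpen_biInter_finset fun i _ => hPopen i.1 i.2
  have h1P₀ : (1 : G) ∈ P₀ := Set.mem_iInter₂.mpr fun i _ => h1P i.1 i.2
  haveI : CompactSpace C := isCompact_iff_compactSpace.mp hCc
  have hP₁o : IsOpen ((Subtype.val : C → G) ⁻¹' P₀) := hP₀o.preimage continuous_subtype_val
  have h1P₁ : (1 : C) ∈ (Subtype.val : C → G) ⁻¹' P₀ := h1P₀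
  obtain ⟨W₁, hW₁clopen, hW₁mem, hW₁sub⟩ := compact_exists_isClopen_in_isOpen hP₁o h1P₁
  obtain ⟨S, hS⟩ := IsTopologicalGroup.exist_openSubgroup_sub_clopen_nhds_of_one hW₁clopen hW₁mem
  set W : Subgroup G := Subgroup.map C.subtype S.1 with hWdef
  have hWP₀ : (W : Set G) ⊆ P₀ := by
    rintro x hx
    obtain ⟨y, hy, rfl⟩ := Subgroup.mem_map.mp hx
    exact hW₁sub (hS hy)
  have hWopen : IsOpen (W : Set G) := by
    rw [Subgroup.coe_map]
    exact hCo.isOpenMap_subtype_val _ S.isOpen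
  set genS : Set G := ⋃ k ∈ (K : Set G), (fun w => k * w * k⁻¹) '' (W : Set G) with hgenS
  set N : Subgroup G := Subgroup.closure genS with hNdef
  have hgenC : genS ⊆ (C : Set G) := by
    rintro x hx
    rw [Set.mem_iUnion₂] at hx
    obtain ⟨k, hk, w, hw, rfl⟩ := hx
    obtain ⟨i, hi, hki⟩ := Set.mem_iUnion₂.mp (ht hk)
    exact hOP i.1 i.2 k hki w (Set.mem_iInter₂.mp (hWP₀ hw) i hi)
  have hNC : N ≤ C := (Subgroup.closure_le C).mpr hgenC
  have hWN : W ≤ N := by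
    intro x hx
    apply Subgroup.subset_closure
    rw [Set.mem_iUnion₂]
    exact ⟨1, K.one_mem, x, hx, by group⟩
  have hNopen : IsOpen (N : Set G) := Subgroup.isOpen_mono hWN hWopen
  have hNcpt : IsCompact (N : Set G) :=
    hCc.of_isClosed_subset (Subgroup.isClosed_of_isOpen _ hNopen) hNC
  refine ⟨N, hNopen, hNcpt, hNC, ?_⟩
  intro k hk n hn
  have hmap : Subgroup.map (MulAut.conj k).toMonoidHom N ≤ N := by
    rw [hNdef, MonoidHom.map_closure]
    apply Subgroup.closure_mono
    rintro x ⟨y, hy, rfl⟩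
    rw [Set.mem_iUnion₂] at hy ⊢
    obtain ⟨k₀, hk₀, w, hw, rfl⟩ := hy
    refine ⟨k * k₀, mul_mem hk hk₀, w, hw, ?_⟩
    show (k * k₀) * w * (k * k₀)⁻¹ = (MulAut.conj k).toMonoidHom (k₀ * w * k₀⁻¹)
    simp only [MulEquiv.coe_toMonoidHom, MulAut.conj_apply]
    group
  have : (MulAut.conj k).toMonoidHom n ∈ Subgroup.map (MulAut.conj k).toMonoidHom N :=
    Subgroup.mem_map.mpr ⟨n, hn, rfl⟩
  have h2 := hmap this
  simpa [MulAut.conj_apply] using h2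

end Aux8

open scoped Pointwise


theorem pushClass_eq {G : Type*} [Group G] {PH PG : Subgroup G → Prop} {SH SG : Set G}
    {A : Type*} [CommRing A] {Hsub : Subgroup G}
    {FH : CohFunctor G PH SH A} {FG : CohFunctor G PG SG A}
    (ι : PushMap Hsub FH FG) (u : G) (K U : Subgroup G)
    (hX : PH (Hsub ⊓ conjSub u U))
    (hKX : K ⊓ conjSub u U ≤ Hsub ⊓ conjSub u U)
    (fp : FH.Iw K →ₗ[A] FH.Iw (K ⊓ conjSub u U)) (z : FH.Iw K)
    (h2 : K ⊓ conjSub u U ≤ Hsub ⊓ conjSub u U) :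
    pushClass ι u K U hX hKX fp z =
      FG.push u (conjSub u U) U
        (ι.toFun (conjSub u U) ((fp z).1 ⟨Hsub ⊓ conjSub u U, hX, h2⟩)) := rfl

/-- vertical norm-compatibility, finite level.  With notation as in the
paper: `ι : H ↪ G` a closed subgroup, `M_H`, `M_G` Cartesian cohomology functors,
`ι_⋆ : M_H → M_G` a pushforward map, `u ∈ G`, `K ⊆ H` compact, `z ∈ M_{H,Iw}(K)`, and
`U'' ⊆ U' ⊆ U` open compact subgroups of `G` contained in `Σ` with
(i) `K ∩ uU''u⁻¹ = K ∩ uU'u⁻¹`; and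
(ii) a finite set `R ⊆ (u⁻¹Ku) ∩ U` of representatives with `U = ⨆_{γ ∈ R} U'γ` and
`[K ∩ uUu⁻¹ : K ∩ uU'u⁻¹] = [U : U']`.
Then `pr_{U'',U',⋆}(z_{U''}) = pr^⋆_{U',U}(z_U)`; and consequently, if `τ ∈ Σ⁻¹` satisfies
`U' = U ∩ τUτ⁻¹` and `τ⁻¹U''τ ⊆ U`, then `[τ]_{U'',U,⋆}(z_{U''}) = T_U(z_U)` for the
Hecke operator `T_U` of the double coset `Uτ⁻¹U`. -/
theorem stmt_8 {G : Type*} [Group G] [TopologicalSpace G] [IsTopologicalGroup G]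
    [LocallyCompactSpace G] [T2Space G] [TotallyDisconnectedSpace G]
    {A : Type*} [CommRing A]
    (Sig : Submonoid G) (hSig : IsOpen (Sig : Set G))
    (Hsub : Subgroup G) (hHcl : IsClosed (Hsub : Set G))
    -- the Cartesian cohomology functor for (H, Σ ∩ H)
    (FH : CohFunctor G
      (fun X => X ≤ Hsub ∧ IsCompact (X : Set G) ∧
        (∃ O : Set G, IsOpen O ∧ (X : Set G) = O ∩ (Hsub : Set G)) ∧
        (X : Set G) ⊆ (Sig : Set G) ∩ (Hsub : Set G))
      ((Sig : Set G) ∩ (Hsub : Set G)) A)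
    -- the Cartesian cohomology functor for (G, Σ)
    (FG : CohFunctor G
      (fun U => IsOpen (U : Set G) ∧ IsCompact (U : Set G) ∧ (U : Set G) ⊆ (Sig : Set G))
      (Sig : Set G) A)
    (hFH : FH.IsCartesian) (hFG : FG.IsCartesian)
    (ι : PushMap Hsub FH FG)
    (u : G) (hu : u ∈ Sig) (huinv : u⁻¹ ∈ Sig)
    (K : Subgroup G) (hKH : K ≤ Hsub) (hKcpt : IsCompact (K : Set G))
    (z : FH.Iw K)
    -- the three levels U'' ⊆ U' ⊆ U
    (U U' U'' : Subgroup G)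
    (hU : IsOpen (U : Set G) ∧ IsCompact (U : Set G) ∧ (U : Set G) ⊆ (Sig : Set G))
    (hU' : IsOpen (U' : Set G) ∧ IsCompact (U' : Set G) ∧ (U' : Set G) ⊆ (Sig : Set G))
    (hU'' : IsOpen (U'' : Set G) ∧ IsCompact (U'' : Set G) ∧ (U'' : Set G) ⊆ (Sig : Set G))
    (hU''U' : U'' ≤ U') (hU'U : U' ≤ U)
    (hconjU : ((conjSub u U : Subgroup G) : Set G) ⊆ (Sig : Set G))
    (hconjU'' : ((conjSub u U'' : Subgroup G) : Set G) ⊆ (Sig : Set G))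
    (hfinU : (K ⊓ conjSub u U).relIndex K ≠ 0)
    (hfinU'' : (K ⊓ conjSub u U'').relIndex K ≠ 0)
    (hXU : (Hsub ⊓ conjSub u U) ≤ Hsub ∧ IsCompact ((Hsub ⊓ conjSub u U : Subgroup G) : Set G) ∧
      (∃ O : Set G, IsOpen O ∧ ((Hsub ⊓ conjSub u U : Subgroup G) : Set G) = O ∩ (Hsub : Set G)) ∧
      ((Hsub ⊓ conjSub u U : Subgroup G) : Set G) ⊆ (Sig : Set G) ∩ (Hsub : Set G))
    (hXU'' : (Hsub ⊓ conjSub u U'') ≤ Hsub ∧ IsCompact ((Hsub ⊓ conjSub u U'' : Subgroup G) : Set G) ∧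
      (∃ O : Set G, IsOpen O ∧ ((Hsub ⊓ conjSub u U'' : Subgroup G) : Set G) = O ∩ (Hsub : Set G)) ∧
      ((Hsub ⊓ conjSub u U'' : Subgroup G) : Set G) ⊆ (Sig : Set G) ∩ (Hsub : Set G))
    -- the finite pullback maps on Iwasawa cohomology (unique, by Statement 1)
    (fpU : FH.Iw K →ₗ[A] FH.Iw (K ⊓ conjSub u U))
    (hfpU : IwFinPullSpec FH K (K ⊓ conjSub u U) fpU)
    (fpU'' : FH.Iw K →ₗ[A] FH.Iw (K ⊓ conjSub u U''))
    (hfpU'' : IwFinPullSpec FH K (K ⊓ conjSub u U'') fpU'')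
    -- hypothesis (i)
    (hi : K ⊓ conjSub u U'' = K ⊓ conjSub u U')
    -- hypothesis (ii)
    (R : Finset G) (hRmem : ∀ γ ∈ R, u * γ * u⁻¹ ∈ K ∧ γ ∈ U)
    (hRcover : ∀ v ∈ U, ∃! γ, γ ∈ R ∧ v * γ⁻¹ ∈ U')
    (hindex : (K ⊓ conjSub u U').relIndex (K ⊓ conjSub u U) = U'.relIndex U) :
    FG.push 1 U'' U'
        (pushClass ι u K U'' hXU'' (inf_le_inf_right _ hKH) fpU'' z) =
      FG.pull 1 U' U (pushClass ι u K U hXU (inf_le_inf_right _ hKH) fpU z) ∧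
    (∀ τ : G, τ⁻¹ ∈ Sig → U' = U ⊓ conjSub τ U → (∀ x ∈ U'', τ⁻¹ * x * τ ∈ U) →
      FG.push τ U'' U (pushClass ι u K U'' hXU'' (inf_le_inf_right _ hKH) fpU'' z) =
        heckeT FG τ U (pushClass ι u K U hXU (inf_le_inf_right _ hKH) fpU z)) := by
  classical
  by_cases hex : ∃ V₀ : Subgroup G, (V₀ ≤ Hsub ∧ IsCompact (V₀ : Set G) ∧
      (∃ O : Set G, IsOpen O ∧ (V₀ : Set G) = O ∩ (Hsub : Set G)) ∧
      (V₀ : Set G) ⊆ (Sig : Set G) ∩ (Hsub : Set G)) ∧ K ≤ V₀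
  case neg =>
    haveI : IsEmpty {W : Subgroup G // (W ≤ Hsub ∧ IsCompact (W : Set G) ∧
        (∃ O : Set G, IsOpen O ∧ (W : Set G) = O ∩ (Hsub : Set G)) ∧
        (W : Set G) ⊆ (Sig : Set G) ∩ (Hsub : Set G)) ∧ K ≤ W} :=
      ⟨fun W => hex ⟨W.1, W.2⟩⟩
    have hz : z = 0 := Subtype.ext (funext fun W => isEmptyElim W)
    constructor
    · rw [hz]; simp [pushClass, map_zero]
    · intro τ _ _ _; rw [hz]; simp [pushClass, map_zero]
  case pos =>
  obtain ⟨V₀, hPV₀, hKV₀⟩ := hex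
  have hKSig : ∀ k ∈ K, k ∈ Sig := fun k hk => (hPV₀.2.2.2 (hKV₀ hk)).1
  -- notation
  have hX'X : conjSub u U' ≤ conjSub u U := Aux8.conjSub_mono hU'U
  have hX''X' : conjSub u U'' ≤ conjSub u U' := Aux8.conjSub_mono hU''U'
  have hX'Sig : (conjSub u U' : Set G) ⊆ (Sig : Set G) := fun x hx => hconjU (hX'X hx)
  have hPGX : IsOpen ((conjSub u U : Subgroup G) : Set G) ∧
      IsCompact ((conjSub u U : Subgroup G) : Set G) ∧
      ((conjSub u U : Subgroup G) : Set G) ⊆ (Sig : Set G) :=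
    ⟨Aux8.isOpen_conjSub hU.1 u, Aux8.isCompact_conjSub hU.2.1 u, hconjU⟩
  have hPGX' : IsOpen ((conjSub u U' : Subgroup G) : Set G) ∧
      IsCompact ((conjSub u U' : Subgroup G) : Set G) ∧
      ((conjSub u U' : Subgroup G) : Set G) ⊆ (Sig : Set G) :=
    ⟨Aux8.isOpen_conjSub hU'.1 u, Aux8.isCompact_conjSub hU'.2.1 u, hX'Sig⟩
  have hPGX'' : IsOpen ((conjSub u U'' : Subgroup G) : Set G) ∧
      IsCompact ((conjSub u U'' : Subgroup G) : Set G) ∧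
      ((conjSub u U'' : Subgroup G) : Set G) ⊆ (Sig : Set G) :=
    ⟨Aux8.isOpen_conjSub hU''.1 u, Aux8.isCompact_conjSub hU''.2.1 u, hconjU''⟩
  -- PH for Hsub ⊓ X'
  have hPHX' : (Hsub ⊓ conjSub u U') ≤ Hsub ∧
      IsCompact ((Hsub ⊓ conjSub u U' : Subgroup G) : Set G) ∧
      (∃ O : Set G, IsOpen O ∧
        ((Hsub ⊓ conjSub u U' : Subgroup G) : Set G) = O ∩ (Hsub : Set G)) ∧
      ((Hsub ⊓ conjSub u U' : Subgroup G) : Set G) ⊆ (Sig : Set G) ∩ (Hsub : Set G) := by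
    refine ⟨inf_le_left, ?_, ⟨(conjSub u U' : Set G), Aux8.isOpen_conjSub hU'.1 u, ?_⟩, ?_⟩
    · rw [Subgroup.coe_inf]
      exact hPGX'.2.1.of_isClosed_subset (hHcl.inter hPGX'.2.1.isClosed)
        Set.inter_subset_right
    · rw [Subgroup.coe_inf, Set.inter_comm]
    · intro x hx
      have hx' := Subgroup.mem_inf.mp (SetLike.mem_coe.mp hx)
      exact ⟨hX'Sig hx'.2, hx'.1⟩
  -- construction of N and V
  obtain ⟨N, hNo, hNc, hNX'', hNconj⟩ := Aux8.exists_conj_stable K (conjSub u U'') hKcpt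
    (Aux8.isOpen_conjSub hU''.1 u) (Aux8.isCompact_conjSub hU''.2.1 u)
  have hM0conj : ∀ k ∈ K, ∀ m ∈ Hsub ⊓ N, k * m * k⁻¹ ∈ Hsub ⊓ N := by
    intro k hk m hm
    have hm' := Subgroup.mem_inf.mp hm
    exact Subgroup.mem_inf.mpr ⟨Hsub.mul_mem (Hsub.mul_mem (hKH hk) hm'.1)
      (Hsub.inv_mem (hKH hk)), hNconj k hk m hm'.2⟩
  set V : Subgroup G := Aux8.mulKN K (Hsub ⊓ N) hM0conj with hVdef
  have hKV : K ≤ V := fun k hk => ⟨k, hk, 1, Subgroup.one_mem _, (mul_one k).symm⟩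
  have hM0V : Hsub ⊓ N ≤ V := fun m hm => ⟨1, K.one_mem, m, hm, (one_mul m).symm⟩
  have hVH : V ≤ Hsub := by
    intro x hx
    obtain ⟨k, hk, m, hm, rfl⟩ := hx
    exact Hsub.mul_mem (hKH hk) (Subgroup.mem_inf.mp hm).1
  have hVSig : (V : Set G) ⊆ (Sig : Set G) := by
    intro x hx
    obtain ⟨k, hk, m, hm, rfl⟩ := hx
    exact Sig.mul_mem (hKSig k hk) (hconjU'' (hNX'' (Subgroup.mem_inf.mp hm).2))
  have hM0cpt : IsCompact ((Hsub ⊓ N : Subgroup G) : Set G) := by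
    rw [Subgroup.coe_inf]
    exact hNc.of_isClosed_subset (hHcl.inter (Subgroup.isClosed_of_isOpen _ hNo))
      Set.inter_subset_right
  have hVcoe : (V : Set G) = (K : Set G) * ((Hsub ⊓ N : Subgroup G) : Set G) := by
    ext x
    constructor
    · rintro ⟨k, hk, m, hm, rfl⟩
      exact Set.mul_mem_mul hk hm
    · rintro ⟨k, hk, m, hm, rfl⟩
      exact ⟨k, hk, m, hm, rfl⟩
  have hVcpt : IsCompact (V : Set G) := by rw [hVcoe]; exact hKcpt.mul hM0cpt
  have hVopenH : ∃ O : Set G, IsOpen O ∧ (V : Set G) = O ∩ (Hsub : Set G) := by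
    refine ⟨⋃ v ∈ (V : Set G), v • (N : Set G), isOpen_biUnion fun v _ => hNo.smul v, ?_⟩
    ext x
    constructor
    · intro hx
      refine ⟨Set.mem_biUnion hx ?_, hVH hx⟩
      exact Set.mem_smul_set_iff_inv_smul_mem.mpr (by simpa using N.one_mem)
    · rintro ⟨hx1, hx2⟩
      obtain ⟨v, hv, hxv⟩ := Set.mem_iUnion₂.mp hx1
      have hn : v⁻¹ * x ∈ N := by
        have := Set.mem_smul_set_iff_inv_smul_mem.mp hxv
        simpa using this
      have hnH : v⁻¹ * x ∈ Hsub := Hsub.mul_mem (Hsub.inv_mem (hVH hv)) hx2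
      have : x = v * (v⁻¹ * x) := by group
      rw [this]
      exact V.mul_mem hv (hM0V (Subgroup.mem_inf.mpr ⟨hnH, hn⟩))
  have hPV : V ≤ Hsub ∧ IsCompact ((V : Subgroup G) : Set G) ∧
      (∃ O : Set G, IsOpen O ∧ ((V : Subgroup G) : Set G) = O ∩ (Hsub : Set G)) ∧
      ((V : Subgroup G) : Set G) ⊆ (Sig : Set G) ∩ (Hsub : Set G) :=
    ⟨hVH, hVcpt, hVopenH, fun x hx => ⟨hVSig hx, hVH hx⟩⟩
  -- PH for V ⊓ Y
  have hPA : ∀ Y : Subgroup G, IsOpen (Y : Set G) → IsCompact (Y : Set G) →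
      (V ⊓ Y ≤ Hsub ∧ IsCompact ((V ⊓ Y : Subgroup G) : Set G) ∧
       (∃ O : Set G, IsOpen O ∧ ((V ⊓ Y : Subgroup G) : Set G) = O ∩ (Hsub : Set G)) ∧
       ((V ⊓ Y : Subgroup G) : Set G) ⊆ (Sig : Set G) ∩ (Hsub : Set G)) := by
    intro Y hYo hYc
    obtain ⟨O, hOo, hOeq⟩ := hVopenH
    refine ⟨le_trans inf_le_left hVH, ?_, ⟨O ∩ (Y : Set G), hOo.inter hYo, ?_⟩, ?_⟩
    · rw [Subgroup.coe_inf]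
      exact hVcpt.inter_right hYc.isClosed
    · rw [Subgroup.coe_inf, hOeq, Set.inter_right_comm]
    · intro x hx
      have hx' := Subgroup.mem_inf.mp (SetLike.mem_coe.mp hx)
      exact ⟨hVSig hx'.1, hVH hx'.1⟩
  have hPAX := hPA (conjSub u U) (Aux8.isOpen_conjSub hU.1 u) (Aux8.isCompact_conjSub hU.2.1 u)
  have hPAX'' := hPA (conjSub u U'') (Aux8.isOpen_conjSub hU''.1 u)
    (Aux8.isCompact_conjSub hU''.2.1 u)
  -- generation and relIndex
  have hM0X'' : Hsub ⊓ N ≤ conjSub u U'' := le_trans inf_le_right hNX''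
  have hgenA : ∀ Y : Subgroup G, (Hsub ⊓ N ≤ Y) →
      ∀ v ∈ V, ∃ k ∈ K, ∃ a ∈ V ⊓ Y, v = k * a := by
    intro Y hY v hv
    obtain ⟨k, hk, m, hm, rfl⟩ := hv
    exact ⟨k, hk, m, Subgroup.mem_inf.mpr ⟨hM0V hm, hY hm⟩, rfl⟩
  have hAKeq : ∀ Y : Subgroup G, (V ⊓ Y) ⊓ K = K ⊓ Y := by
    intro Y
    ext x
    simp only [Subgroup.mem_inf]
    constructor
    · rintro ⟨⟨-, h2⟩, h3⟩; exact ⟨h3, h2⟩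
    · rintro ⟨h1, h2⟩; exact ⟨⟨hKV h1, h2⟩, h1⟩
  have hrel : ∀ Y : Subgroup G, (Hsub ⊓ N ≤ Y) →
      (V ⊓ Y).relIndex V = (K ⊓ Y).relIndex K := by
    intro Y hY
    have h := Aux8.relIndex_eq_of_mul hKV (inf_le_left : V ⊓ Y ≤ V) (hgenA Y hY)
    rwa [hAKeq Y] at h
  have spec1 := hfpU V (V ⊓ conjSub u U) hPV hPAX hKV (inf_le_inf_right _ hKV)
    inf_le_left (hAKeq _) (hrel _ (le_trans hM0X'' (le_trans hX''X' hX'X))) z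
  have spec2 := hfpU'' V (V ⊓ conjSub u U'') hPV hPAX'' hKV (inf_le_inf_right _ hKV)
    inf_le_left (hAKeq _) (hrel _ hM0X'') z
  -- A' = A''
  have hA'A'' : V ⊓ conjSub u U' = V ⊓ conjSub u U'' := by
    apply le_antisymm
    · intro x hx
      have hx' := Subgroup.mem_inf.mp hx
      obtain ⟨k, hk, m, hm, hxd⟩ := hx'.1
      have hmX'' : m ∈ conjSub u U'' := hM0X'' hm
      have hkX' : k ∈ conjSub u U' := by
        have hkeq : k = x * m⁻¹ := by rw [hxd]; group
        rw [hkeq]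
        exact Subgroup.mul_mem _ hx'.2 (inv_mem (hX''X' hmX''))
      have hkKX'' : k ∈ K ⊓ conjSub u U'' := by
        rw [hi]; exact Subgroup.mem_inf.mpr ⟨hk, hkX'⟩
      have hkX'' : k ∈ conjSub u U'' := (Subgroup.mem_inf.mp hkKX'').2
      refine Subgroup.mem_inf.mpr ⟨hx'.1, ?_⟩
      rw [hxd]
      exact Subgroup.mul_mem _ hkX'' hmX''
    · exact inf_le_inf_left V (Aux8.conjSub_mono hU''U')
  -- covering
  have hcovXd : ∀ v ∈ conjSub u U, ∃ x, x ∈ conjSub u U' ∧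
      ∃ d, d ∈ K ∧ d ∈ conjSub u U ∧ v = x * d := by
    intro v hv
    have hv0 : u⁻¹ * v * u ∈ U := Aux8.mem_conjSub.mp hv
    obtain ⟨γ, ⟨hγR, hγU'⟩, -⟩ := hRcover _ hv0
    obtain ⟨hγK, hγU⟩ := hRmem γ hγR
    refine ⟨u * ((u⁻¹ * v * u) * γ⁻¹) * u⁻¹, Aux8.mem_conjSub.mpr ?_,
      u * γ * u⁻¹, hγK, Aux8.mem_conjSub.mpr ?_, by group⟩
    · have h : u⁻¹ * (u * ((u⁻¹ * v * u) * γ⁻¹) * u⁻¹) * u = (u⁻¹ * v * u) * γ⁻¹ := by group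
      rwa [h]
    · have h : u⁻¹ * (u * γ * u⁻¹) * u = γ := by group
      rwa [h]
  -- the Iwasawa-theoretic key identity
  have hpushA := (fpU z).2 ⟨V ⊓ conjSub u U, hPAX, inf_le_inf_right _ hKV⟩
    ⟨Hsub ⊓ conjSub u U, hXU, inf_le_inf_right _ hKH⟩ (inf_le_inf_right _ hVH)
  have hcart := hFH (Hsub ⊓ conjSub u U') (V ⊓ conjSub u U) (Hsub ⊓ conjSub u U)
    hPHX' hPAX hXU (inf_le_inf_left Hsub hX'X) (inf_le_inf_right _ hVH) {1}
    (by
      intro x hx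
      rw [Finset.coe_singleton, Set.mem_singleton_iff] at hx
      rw [hx]; exact Subgroup.one_mem _)
    (by
      intro v hv
      have hv2 := Subgroup.mem_inf.mp hv
      obtain ⟨x, hx, d, hdK, hdX, hveq⟩ := hcovXd v hv2.2
      have hxH : x ∈ Hsub := by
        have hxeq : x = v * d⁻¹ := by rw [hveq]; group
        rw [hxeq]
        exact Hsub.mul_mem hv2.1 (Hsub.inv_mem (hKH hdK))
      exact ⟨1, Finset.mem_singleton_self 1, x, Subgroup.mem_inf.mpr ⟨hxH, hx⟩,
        d, Subgroup.mem_inf.mpr ⟨hKV hdK, hdX⟩, by rw [mul_one]; exact hveq⟩)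
    (fun γ hγ γ' hγ' _ => (Finset.mem_singleton.mp hγ).trans
      (Finset.mem_singleton.mp hγ').symm)
  rw [Finset.sum_singleton] at hcart
  have hAconj : conjSub (1 : G) (V ⊓ conjSub u U) ⊓ (Hsub ⊓ conjSub u U') =
      V ⊓ conjSub u U'' := by
    rw [Aux8.conjSub_one, ← hA'A'']
    ext x
    simp only [Subgroup.mem_inf]
    constructor
    · rintro ⟨⟨h1, -⟩, -, h4⟩; exact ⟨h1, h4⟩
    · rintro ⟨h1, h2⟩; exact ⟨⟨h1, hX'X h2⟩, hVH h1, h2⟩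
  rw [hAconj] at hcart
  have hKeyOp := LinearMap.congr_fun hcart
    ((fpU z).1 ⟨V ⊓ conjSub u U, hPAX, inf_le_inf_right _ hKV⟩)
  simp only [LinearMap.comp_apply] at hKeyOp
  rw [hpushA] at hKeyOp
  have hone : ((1 : G) ∈ (Sig : Set G) ∩ (Hsub : Set G)) := ⟨Sig.one_mem, Hsub.one_mem⟩
  have hpc := FH.pull_comp 1 1 (V ⊓ conjSub u U'') (V ⊓ conjSub u U) V
    hPAX'' hPAX hPV hone hone
    (by
      intro x hx
      have hx' := Subgroup.mem_inf.mp hx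
      simpa using Subgroup.mem_inf.mpr ⟨hx'.1, le_trans hX''X' hX'X hx'.2⟩)
    (by intro x hx; simpa using (inf_le_left : V ⊓ conjSub u U ≤ V) hx)
  have e1 : FH.pull 1 (V ⊓ conjSub u U'') (V ⊓ conjSub u U)
      ((fpU z).1 ⟨V ⊓ conjSub u U, hPAX, inf_le_inf_right _ hKV⟩) =
      (fpU'' z).1 ⟨V ⊓ conjSub u U'', hPAX'', inf_le_inf_right _ hKV⟩ := by
    rw [spec1, spec2]
    have h := LinearMap.congr_fun hpc (z.1 ⟨V, hPV, hKV⟩)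
    simp only [LinearMap.comp_apply, one_mul] at h
    exact h
  rw [e1] at hKeyOp
  have hKX''HX' : K ⊓ conjSub u U'' ≤ Hsub ⊓ conjSub u U' := fun x hx =>
    Subgroup.mem_inf.mpr ⟨hKH (Subgroup.mem_inf.mp hx).1, hX''X' (Subgroup.mem_inf.mp hx).2⟩
  have hpush'' := (fpU'' z).2 ⟨V ⊓ conjSub u U'', hPAX'', inf_le_inf_right _ hKV⟩
    ⟨Hsub ⊓ conjSub u U', hPHX', hKX''HX'⟩
    (fun x hx => Subgroup.mem_inf.mpr ⟨hVH (Subgroup.mem_inf.mp hx).1,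
      hX''X' (Subgroup.mem_inf.mp hx).2⟩)
  rw [hpush''] at hKeyOp
  -- hKeyOp : FH.pull 1 (Hsub ⊓ X') (Hsub ⊓ X) ((fpU z).1 ⟨Hsub ⊓ X,..⟩) = (fpU'' z).1 ⟨Hsub ⊓ X',..⟩
  -- Mackey for ι
  have hcomp := ι.compat_pull (conjSub u U') (conjSub u U) hPGX' hPGX hX'X {1}
    (by
      intro x hx
      rw [Finset.coe_singleton, Set.mem_singleton_iff] at hx
      rw [hx]; exact Subgroup.one_mem _)
    (by
      intro v hv
      obtain ⟨x, hx, d, hdK, hdX, hveq⟩ := hcovXd v hv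
      exact ⟨1, Finset.mem_singleton_self 1, x, hx, d, hKH hdK, hdX,
        by rw [mul_one]; exact hveq⟩)
    (fun γ hγ γ' hγ' _ => (Finset.mem_singleton.mp hγ).trans
      (Finset.mem_singleton.mp hγ').symm)
  rw [Finset.sum_singleton] at hcomp
  have h1X : conjSub ((1 : G))⁻¹ (conjSub u U') ⊓ conjSub u U = conjSub u U' := by
    rw [inv_one, Aux8.conjSub_one]
    exact inf_eq_left.mpr hX'X
  rw [h1X, inv_one, FG.push_id _ hPGX'] at hcomp
  have hE2 := LinearMap.congr_fun hcomp
    ((fpU z).1 ⟨Hsub ⊓ conjSub u U, hXU, inf_le_inf_right _ hKH⟩)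
  simp only [LinearMap.comp_apply, LinearMap.id_apply] at hE2
  rw [hKeyOp] at hE2
  -- conjugation pulls on the G side
  have hpe1 := FG.pull_eq_push u⁻¹ U (conjSub u U) hU hPGX huinv (by rw [inv_inv])
  rw [inv_inv] at hpe1
  have hc1 := FG.pull_comp 1 u⁻¹ U' U (conjSub u U) hU' hU hPGX Sig.one_mem huinv
    (fun x hx => by simpa using hU'U hx)
    (fun x hx => Aux8.mem_conjSub.mpr (by
      have h : u⁻¹ * ((u⁻¹)⁻¹ * x * u⁻¹) * u = x := by group
      rwa [h]))
  have hc2 := FG.pull_comp u⁻¹ 1 U' (conjSub u U') (conjSub u U) hU' hPGX' hPGX huinv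
    Sig.one_mem
    (fun x hx => Aux8.mem_conjSub.mpr (by
      have h : u⁻¹ * ((u⁻¹)⁻¹ * x * u⁻¹) * u = x := by group
      rwa [h]))
    (fun x hx => by simpa using hX'X hx)
  have hpe2 := FG.pull_eq_push u⁻¹ U' (conjSub u U') hU' hPGX' huinv (by rw [inv_inv])
  rw [inv_inv] at hpe2
  -- pushes on the G side
  have hd1 := FG.push_comp u 1 (conjSub u U'') U'' U' hPGX'' hU'' hU' huinv
    (by rw [inv_one]; exact Sig.one_mem)
    (fun x hx => Aux8.mem_conjSub.mp hx)
    (fun x hx => by simpa using hU''U' hx)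
  have hd2 := FG.push_comp 1 u (conjSub u U'') (conjSub u U') U' hPGX'' hPGX' hU'
    (by rw [inv_one]; exact Sig.one_mem) huinv
    (fun x hx => by simpa using hX''X' hx)
    (fun x hx => Aux8.mem_conjSub.mp hx)
  have hcp := ι.compat_push 1 Hsub.one_mem (by rw [inv_one]; exact Sig.one_mem)
    (by rw [inv_one]; exact hone) (conjSub u U'') (conjSub u U') hPGX'' hPGX'
    (fun x hx => by simpa using hX''X' hx)
  have hpushHX := (fpU'' z).2 ⟨Hsub ⊓ conjSub u U'', hXU'', inf_le_inf_right _ hKH⟩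
    ⟨Hsub ⊓ conjSub u U', hPHX', hKX''HX'⟩ (inf_le_inf_left Hsub hX''X')
  -- abbreviations for the two classes
  have hzU := pushClass_eq ι u K U hXU (inf_le_inf_right _ hKH) fpU z
    (inf_le_inf_right _ hKH)
  have hzU'' := pushClass_eq ι u K U'' hXU'' (inf_le_inf_right _ hKH) fpU'' z
    (inf_le_inf_right _ hKH)
  have hpart1 : FG.push 1 U'' U'
      (pushClass ι u K U'' hXU'' (inf_le_inf_right _ hKH) fpU'' z) =
      FG.pull 1 U' U (pushClass ι u K U hXU (inf_le_inf_right _ hKH) fpU z) := by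
    rw [hzU, hzU'']
    -- left side
    have l1 := LinearMap.congr_fun hd1
      (ι.toFun (conjSub u U'') ((fpU'' z).1
        ⟨Hsub ⊓ conjSub u U'', hXU'', inf_le_inf_right _ hKH⟩))
    have l2 := LinearMap.congr_fun hd2
      (ι.toFun (conjSub u U'') ((fpU'' z).1
        ⟨Hsub ⊓ conjSub u U'', hXU'', inf_le_inf_right _ hKH⟩))
    have l3 := LinearMap.congr_fun hcp
      ((fpU'' z).1 ⟨Hsub ⊓ conjSub u U'', hXU'', inf_le_inf_right _ hKH⟩)
    simp only [LinearMap.comp_apply] at l1 l2 l3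
    rw [mul_one] at l1
    rw [one_mul] at l2
    -- right side
    have r1 := LinearMap.congr_fun hc1
      (ι.toFun (conjSub u U) ((fpU z).1
        ⟨Hsub ⊓ conjSub u U, hXU, inf_le_inf_right _ hKH⟩))
    have r2 := LinearMap.congr_fun hc2
      (ι.toFun (conjSub u U) ((fpU z).1
        ⟨Hsub ⊓ conjSub u U, hXU, inf_le_inf_right _ hKH⟩))
    simp only [LinearMap.comp_apply] at r1 r2
    rw [one_mul] at r1
    rw [mul_one] at r2
    calc FG.push 1 U'' U' (FG.push u (conjSub u U'') U''
          (ι.toFun (conjSub u U'') ((fpU'' z).1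
            ⟨Hsub ⊓ conjSub u U'', hXU'', inf_le_inf_right _ hKH⟩)))
        = FG.push u (conjSub u U'') U' (ι.toFun (conjSub u U'') ((fpU'' z).1
            ⟨Hsub ⊓ conjSub u U'', hXU'', inf_le_inf_right _ hKH⟩)) := l1
      _ = FG.push u (conjSub u U') U' (FG.push 1 (conjSub u U'') (conjSub u U')
            (ι.toFun (conjSub u U'') ((fpU'' z).1
              ⟨Hsub ⊓ conjSub u U'', hXU'', inf_le_inf_right _ hKH⟩))) := l2.symm
      _ = FG.push u (conjSub u U') U' (ι.toFun (conjSub u U')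
            (FH.push 1 (Hsub ⊓ conjSub u U'') (Hsub ⊓ conjSub u U')
              ((fpU'' z).1 ⟨Hsub ⊓ conjSub u U'', hXU'', inf_le_inf_right _ hKH⟩))) := by
          rw [l3]
      _ = FG.push u (conjSub u U') U' (ι.toFun (conjSub u U')
            ((fpU'' z).1 ⟨Hsub ⊓ conjSub u U', hPHX', hKX''HX'⟩)) := by rw [hpushHX]
      _ = FG.push u (conjSub u U') U' (FG.pull 1 (conjSub u U') (conjSub u U)
            (ι.toFun (conjSub u U) ((fpU z).1
              ⟨Hsub ⊓ conjSub u U, hXU, inf_le_inf_right _ hKH⟩))) := by rw [hE2]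
      _ = FG.pull u⁻¹ U' (conjSub u U') (FG.pull 1 (conjSub u U') (conjSub u U)
            (ι.toFun (conjSub u U) ((fpU z).1
              ⟨Hsub ⊓ conjSub u U, hXU, inf_le_inf_right _ hKH⟩))) := by rw [hpe2]
      _ = FG.pull u⁻¹ U' (conjSub u U)
            (ι.toFun (conjSub u U) ((fpU z).1
              ⟨Hsub ⊓ conjSub u U, hXU, inf_le_inf_right _ hKH⟩)) := r2
      _ = FG.pull 1 U' U (FG.pull u⁻¹ U (conjSub u U)
            (ι.toFun (conjSub u U) ((fpU z).1
              ⟨Hsub ⊓ conjSub u U, hXU, inf_le_inf_right _ hKH⟩))) := r1.symm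
      _ = FG.pull 1 U' U (FG.push u (conjSub u U) U
            (ι.toFun (conjSub u U) ((fpU z).1
              ⟨Hsub ⊓ conjSub u U, hXU, inf_le_inf_right _ hKH⟩))) := by rw [hpe1]
  refine ⟨hpart1, ?_⟩
  intro τ hτ hτU' hτU''
  have hUτU : conjSub τ⁻¹ U' ≤ U := by
    intro x hx
    have h := Aux8.mem_conjSub.mp hx
    rw [inv_inv] at h
    rw [hτU'] at h
    have h2 := (Subgroup.mem_inf.mp h).2
    have h3 := Aux8.mem_conjSub.mp h2
    have h4 : τ⁻¹ * (τ * x * τ⁻¹) * τ = x := by group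
    rwa [h4] at h3
  have hPGUτ : IsOpen ((conjSub τ⁻¹ U' : Subgroup G) : Set G) ∧
      IsCompact ((conjSub τ⁻¹ U' : Subgroup G) : Set G) ∧
      ((conjSub τ⁻¹ U' : Subgroup G) : Set G) ⊆ (Sig : Set G) :=
    ⟨Aux8.isOpen_conjSub hU'.1 τ⁻¹, Aux8.isCompact_conjSub hU'.2.1 τ⁻¹,
      fun x hx => hU.2.2 (hUτU hx)⟩
  have hk1 := FG.push_comp 1 τ U'' U' (conjSub τ⁻¹ U') hU'' hU' hPGUτ
    (by rw [inv_one]; exact Sig.one_mem) hτ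
    (fun x hx => by simpa using hU''U' hx)
    (fun x hx => Aux8.mem_conjSub.mpr (by
      have h : (τ⁻¹)⁻¹ * (τ⁻¹ * x * τ) * τ⁻¹ = x := by group
      rwa [h]))
  have hk2 := FG.push_comp τ 1 U'' (conjSub τ⁻¹ U') U hU'' hPGUτ hU hτ
    (by rw [inv_one]; exact Sig.one_mem)
    (fun x hx => Aux8.mem_conjSub.mpr (by
      have h : (τ⁻¹)⁻¹ * (τ⁻¹ * x * τ) * τ⁻¹ = x := by group
      rw [h]; exact hU''U' hx))
    (fun x hx => by simpa using hUτU hx)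
  have k1 := LinearMap.congr_fun hk1
    (pushClass ι u K U'' hXU'' (inf_le_inf_right _ hKH) fpU'' z)
  have k2 := LinearMap.congr_fun hk2
    (pushClass ι u K U'' hXU'' (inf_le_inf_right _ hKH) fpU'' z)
  simp only [LinearMap.comp_apply] at k1 k2
  rw [one_mul] at k1
  rw [mul_one] at k2
  simp only [heckeT, LinearMap.comp_apply]
  rw [← hτU']
  rw [← hpart1, k1, k2]
end

section
/- In the setup of the preceding norm relation (levels U'' ⊆ U' = U ∩ τUτ⁻¹ ⊆ U, element u, compact K ⊆ H, class z, classes z_U and z_{U''}, hypotheses (i) and (ii), and τ ∈ Σ⁻¹), fix r ≥ 1 and suppose τ^{-r} U τ^{r} ⊆ Σ and τ^{-(r+1)} U'' τ^{r+1} ⊆ Σ; set V = τ^{-r} U τ^{r}, V'' = τ^{-(r+1)} U'' τ^{r+1} (so V'' ⊆ V), ξ = [τ^r]_{U,V,⋆}(z_U) ∈ M_G(V) and ξ'' = [τ^{r+1}]_{U'',V'',⋆}(z_{U''}) ∈ M_G(V''). Then pr_{V'', V, ⋆}(ξ'') = T_V(ξ), where T_V = pr_{τ⁻¹Wτ, V,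 ⋆} ∘ [τ]_{W, τ⁻¹Wτ, ⋆} ∘ pr^⋆_{W, V} with W = V ∩ τVτ⁻¹ is the Hecke operator of the double coset V τ⁻¹ V. -/
/-! ### Auxiliary lemmas -/

section AuxConj

variable {G : Type*} [Group G]

theorem mem_conjSub {g x : G} {U : Subgroup G} : x ∈ conjSub g U ↔ g⁻¹ * x * g ∈ U := by
  simp only [conjSub, Subgroup.mem_map, MulEquiv.coe_toMonoidHom, MulAut.conj_apply]
  constructor
  · rintro ⟨y, hy, rfl⟩
    have e : g⁻¹ * (g * y * g⁻¹) * g = y := by group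
    rwa [e]
  · intro h
    exact ⟨g⁻¹ * x * g, h, by group⟩

theorem conjSub_one (U : Subgroup G) : conjSub 1 U = U := by
  ext x; simp [mem_conjSub]

theorem conjSub_conjSub (g h : G) (U : Subgroup G) :
    conjSub g (conjSub h U) = conjSub (g * h) U := by
  ext x
  rw [mem_conjSub, mem_conjSub, mem_conjSub]
  have e : h⁻¹ * (g⁻¹ * x * g) * h = (g * h)⁻¹ * x * (g * h) := by group
  rw [e]

theorem conjSub_mono (g : G) {U V : Subgroup G} (h : U ≤ V) : conjSub g U ≤ conjSub g V := by
  intro x hx; rw [mem_conjSub] at hx ⊢; exact h hx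

theorem conjSub_inf (g : G) (U V : Subgroup G) :
    conjSub g (U ⊓ V) = conjSub g U ⊓ conjSub g V := by
  ext x; simp [mem_conjSub, Subgroup.mem_inf]

theorem conj_mem_conjSub {g : G} {U : Subgroup G} : ∀ x ∈ U, g⁻¹ * x * g ∈ conjSub g⁻¹ U := by
  intro x hx
  rw [mem_conjSub]
  have e : g⁻¹⁻¹ * (g⁻¹ * x * g) * g⁻¹ = x := by group
  rwa [e]

theorem conj_maps_to {g : G} {U V : Subgroup G} (h : conjSub g⁻¹ U ≤ V) :
    ∀ x ∈ U, g⁻¹ * x * g ∈ V := fun x hx => h (conj_mem_conjSub x hx)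

theorem coe_conjSub (g : G) (U : Subgroup G) :
    (conjSub g U : Set G) = (fun x => g * x * g⁻¹) '' (U : Set G) := by
  ext x
  constructor
  · intro hx
    exact ⟨g⁻¹ * x * g, mem_conjSub.mp hx, by group⟩
  · rintro ⟨y, hy, rfl⟩
    rw [SetLike.mem_coe, mem_conjSub]
    have e : g⁻¹ * (g * y * g⁻¹) * g = y := by group
    rwa [e]

theorem relindex_eq_of_cover {T T' S' : Subgroup G} (hTT' : T ≤ T')
    (hcov : ∀ v ∈ T', ∃ t ∈ T, ∃ s ∈ S', v = t * s) :
    S'.relIndex T' = (S' ⊓ T).relIndex T := by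
  have hresp : ∀ (a b : ↥T), QuotientGroup.leftRel ((S' ⊓ T).subgroupOf T) a b →
      (QuotientGroup.mk (Subgroup.inclusion hTT' a) : ↥T' ⧸ S'.subgroupOf T') =
        QuotientGroup.mk (Subgroup.inclusion hTT' b) := by
    intro a b hab
    rw [QuotientGroup.leftRel_apply, Subgroup.mem_subgroupOf] at hab
    rw [QuotientGroup.eq, Subgroup.mem_subgroupOf]
    simpa using hab.1
  let φ : (↥T ⧸ (S' ⊓ T).subgroupOf T) → (↥T' ⧸ S'.subgroupOf T') :=
    fun q => Quotient.liftOn' q (fun t => QuotientGroup.mk (Subgroup.inclusion hTT' t)) hresp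
  have hbij : Function.Bijective φ := by
    constructor
    · intro a b hab
      induction a using QuotientGroup.induction_on with | H a =>
      induction b using QuotientGroup.induction_on with | H b =>
      have hab' : (QuotientGroup.mk (Subgroup.inclusion hTT' a) : ↥T' ⧸ S'.subgroupOf T') =
          QuotientGroup.mk (Subgroup.inclusion hTT' b) := hab
      rw [QuotientGroup.eq, Subgroup.mem_subgroupOf] at hab'
      rw [QuotientGroup.eq, Subgroup.mem_subgroupOf]
      refine Subgroup.mem_inf.mpr ⟨by simpa using hab', ?_⟩
      simpa using (a⁻¹ * b : ↥T).2
    · intro q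
      induction q using QuotientGroup.induction_on with | H v =>
      obtain ⟨t, ht, s, hs, hv⟩ := hcov v.1 v.2
      refine ⟨QuotientGroup.mk ⟨t, ht⟩, ?_⟩
      have : φ (QuotientGroup.mk ⟨t, ht⟩) =
          QuotientGroup.mk (Subgroup.inclusion hTT' ⟨t, ht⟩) := rfl
      rw [this, QuotientGroup.eq, Subgroup.mem_subgroupOf]
      have e2 : (((Subgroup.inclusion hTT' ⟨t, ht⟩)⁻¹ * v : ↥T') : G) = t⁻¹ * (t * s) := by
        simp [Subgroup.coe_inclusion, hv]
      rw [e2]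
      have e3 : t⁻¹ * (t * s) = s := by group
      rw [e3]; exact hs
  unfold Subgroup.relIndex Subgroup.index
  exact (Nat.card_congr (Equiv.ofBijective φ hbij)).symm

theorem sup_decomp {V₀ W' T : Subgroup G}
    (hnorm : ∀ g ∈ V₀, ∀ x ∈ W', g * x * g⁻¹ ∈ W') (hTV₀ : T ≤ V₀) :
    ∀ v ∈ T ⊔ W', ∃ t ∈ T, ∃ w ∈ W', v = t * w := by
  intro v hv
  rw [Subgroup.sup_eq_closure] at hv
  induction hv using Subgroup.closure_induction with
  | mem x hx =>
    rcases hx with hx | hx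
    · exact ⟨x, hx, 1, one_mem _, (mul_one x).symm⟩
    · exact ⟨1, one_mem _, x, hx, (one_mul x).symm⟩
  | one => exact ⟨1, one_mem _, 1, one_mem _, (one_mul 1).symm⟩
  | mul a b _ _ iha ihb =>
    obtain ⟨t1, ht1, w1, hw1, rfl⟩ := iha
    obtain ⟨t2, ht2, w2, hw2, rfl⟩ := ihb
    refine ⟨t1 * t2, mul_mem ht1 ht2, (t2⁻¹ * w1 * t2) * w2,
      mul_mem (by simpa using hnorm t2⁻¹ (inv_mem (hTV₀ ht2)) w1 hw1) hw2, by group⟩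
  | inv a _ iha =>
    obtain ⟨t, ht, w, hw, rfl⟩ := iha
    exact ⟨t⁻¹, inv_mem ht, t * w⁻¹ * t⁻¹, hnorm t (hTV₀ ht) w⁻¹ (inv_mem hw), by group⟩

end AuxConj

section AuxTop

open Pointwise

variable {G : Type*} [Group G] [TopologicalSpace G] [IsTopologicalGroup G]

theorem isOpen_conjSub (g : G) {U : Subgroup G} (h : IsOpen (U : Set G)) :
    IsOpen (conjSub g U : Set G) := by
  have e : (conjSub g U : Set G) = (fun x => g⁻¹ * x * g) ⁻¹' (U : Set G) := by
    ext x; exact mem_conjSub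
  rw [e]
  exact h.preimage (by continuity)

theorem isCompact_conjSub (g : G) {U : Subgroup G} (h : IsCompact (U : Set G)) :
    IsCompact (conjSub g U : Set G) := by
  rw [coe_conjSub]
  exact h.image (by continuity)

theorem PH_of_mul {Hsub Kc W' Vb : Subgroup G}
    (hdecomp : ∀ v ∈ Vb, ∃ t ∈ Kc, ∃ w ∈ W', v = t * w) (hKcVb : Kc ≤ Vb) (hW'Vb : W' ≤ Vb)
    (hKcH : Kc ≤ Hsub) (hW'H : W' ≤ Hsub)
    (hKccpt : IsCompact (Kc : Set G)) (hW'cpt : IsCompact (W' : Set G))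
    (hW'open : ∃ O, IsOpen O ∧ (W' : Set G) = O ∩ (Hsub : Set G)) :
    IsCompact (Vb : Set G) ∧ ∃ O, IsOpen O ∧ (Vb : Set G) = O ∩ (Hsub : Set G) := by
  have hset : (Vb : Set G) = (Kc : Set G) * (W' : Set G) := by
    apply Set.Subset.antisymm
    · intro v hv
      obtain ⟨t, ht, w, hw, rfl⟩ := hdecomp v hv
      exact Set.mul_mem_mul ht hw
    · rintro v ⟨t, ht, w, hw, rfl⟩
      exact mul_mem (hKcVb ht) (hW'Vb hw)
  obtain ⟨OW, hOW, hOWeq⟩ := hW'open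
  refine ⟨by rw [hset]; exact hKccpt.mul hW'cpt,
    ⋃ k ∈ (Kc : Set G), (Homeomorph.mulLeft k) '' OW, ?_, ?_⟩
  · exact isOpen_biUnion fun k _ => (Homeomorph.mulLeft k).isOpen_image.mpr hOW
  · ext v
    constructor
    · intro hv
      obtain ⟨t, ht, w, hw, rfl⟩ := hdecomp v hv
      have hw' : w ∈ OW ∩ (Hsub : Set G) := by rw [← hOWeq]; exact hw
      exact ⟨Set.mem_biUnion ht ⟨w, hw'.1, rfl⟩, mul_mem (hKcH ht) (hW'H hw)⟩
    · rintro ⟨hvO, hvH⟩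
      obtain ⟨k, hk, o, ho, rfl⟩ := Set.mem_iUnion₂.mp hvO
      have hoH : (o : G) ∈ (Hsub : Set G) := by
        have h2 : (k : G)⁻¹ * (Homeomorph.mulLeft k o) ∈ Hsub :=
          mul_mem (inv_mem (hKcH hk)) hvH
        simpa using h2
      have hoW : o ∈ W' := by
        rw [← SetLike.mem_coe, hOWeq]; exact ⟨ho, hoH⟩
      exact mul_mem (hKcVb hk) (hW'Vb hoW)

theorem exists_goodW [T2Space G] {Hsub V₀ Q : Subgroup G}
    (hV₀H : V₀ ≤ Hsub) (hV₀cpt : IsCompact (V₀ : Set G))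
    (hV₀open : ∃ O, IsOpen O ∧ (V₀ : Set G) = O ∩ (Hsub : Set G))
    (hQopen : IsOpen (Q : Set G)) (hQcpt : IsCompact (Q : Set G)) :
    ∃ W' : Subgroup G, W' ≤ V₀ ∧ W' ≤ Q ∧ IsCompact (W' : Set G) ∧
      (∃ O, IsOpen O ∧ (W' : Set G) = O ∩ (Hsub : Set G)) ∧
      (∀ g ∈ V₀, ∀ x ∈ W', g * x * g⁻¹ ∈ W') := by
  haveI : CompactSpace ↥V₀ := isCompact_iff_compactSpace.mp hV₀cpt
  have hcont : Continuous (Subtype.val : ↥V₀ → G) := continuous_subtype_val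
  have hclopen : IsClopen ((Subtype.val : ↥V₀ → G) ⁻¹' (Q : Set G)) :=
    ⟨(hQcpt.isClosed).preimage hcont, hQopen.preimage hcont⟩
  obtain ⟨Wn, hWn⟩ := IsTopologicalGroup.exist_openNormalSubgroup_sub_clopen_nhds_of_one hclopen
    (by simpa using one_mem Q)
  set Wsub : Subgroup ↥V₀ := Wn.toOpenSubgroup.toSubgroup with hWsubdef
  have hWopen : IsOpen (Wsub : Set ↥V₀) := Wn.toOpenSubgroup.isOpen
  refine ⟨Wsub.map V₀.subtype, Subgroup.map_subtype_le _, ?_, ?_, ?_, ?_⟩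
  · rintro x hx
    obtain ⟨y, hy, rfl⟩ := Subgroup.mem_map.mp hx
    exact hWn hy
  · have hclosed : IsClosed (Wsub : Set ↥V₀) := Subgroup.isClosed_of_isOpen _ hWopen
    have hcpt : IsCompact (Wsub : Set ↥V₀) := hclosed.isCompact
    have h1 : ((Wsub.map V₀.subtype : Subgroup G) : Set G) = Subtype.val '' (Wsub : Set ↥V₀) := by
      rw [Subgroup.coe_map]; rfl
    rw [h1]
    exact hcpt.image hcont
  · obtain ⟨O₁, hO₁, hpre⟩ := isOpen_induced_iff.mp hWopen
    obtain ⟨O₀, hO₀, hV₀eq⟩ := hV₀open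
    refine ⟨O₁ ∩ O₀, hO₁.inter hO₀, ?_⟩
    have h1 : ((Wsub.map V₀.subtype : Subgroup G) : Set G) = Subtype.val '' (Wsub : Set ↥V₀) := by
      rw [Subgroup.coe_map]; rfl
    have h2 : Subtype.val '' ((Subtype.val : ↥V₀ → G) ⁻¹' O₁) = O₁ ∩ (V₀ : Set G) := by
      ext x
      constructor
      · rintro ⟨y, hy, rfl⟩
        exact ⟨hy, y.2⟩
      · rintro ⟨hx1, hx2⟩
        exact ⟨⟨x, hx2⟩, hx1, rfl⟩
    rw [h1, ← hpre, h2, hV₀eq, ← Set.inter_assoc]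
  · intro g hg x hx
    obtain ⟨y, hy, rfl⟩ := Subgroup.mem_map.mp hx
    have h3 : (⟨g, hg⟩ : ↥V₀) * y * (⟨g, hg⟩ : ↥V₀)⁻¹ ∈ Wsub :=
      Wn.isNormal'.conj_mem y hy ⟨g, hg⟩
    exact Subgroup.mem_map.mpr ⟨_, h3, rfl⟩

end AuxTop

set_option maxHeartbeats 4000000 in
/-- vertical norm-compatibility at the conjugated levels `V_r`.  In the
setup of Statement 8 (levels `U'' ⊆ U' = U ∩ τUτ⁻¹ ⊆ U`, element `u`, compact `K ⊆ H`,
class `z ∈ M_{H,Iw}(K)`, classes `z_U`, `z_{U''}`, hypotheses (i), (ii), and `τ ∈ Σ⁻¹`),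
fix `r ≥ 1` with `τ^{-r} U τ^{r} ⊆ Σ` and `τ^{-(r+1)} U'' τ^{r+1} ⊆ Σ`, and set
`V = τ^{-r} U τ^{r}`, `V'' = τ^{-(r+1)} U'' τ^{r+1}` (so `V'' ⊆ V`),
`ξ = [τ^r]_⋆(z_U) ∈ M_G(V)` and `ξ'' = [τ^{r+1}]_⋆(z_{U''}) ∈ M_G(V'')`.  Then
`pr_{V'',V,⋆}(ξ'') = T_V(ξ)`, where `T_V` is the Hecke operator of the double coset
`V τ⁻¹ V`. -/
theorem stmt_9 {G : Type*} [Group G] [TopologicalSpace G] [IsTopologicalGroup G]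
    [LocallyCompactSpace G] [T2Space G] [TotallyDisconnectedSpace G]
    {A : Type*} [CommRing A]
    (Sig : Submonoid G) (hSig : IsOpen (Sig : Set G))
    (Hsub : Subgroup G) (hHcl : IsClosed (Hsub : Set G))
    (FH : CohFunctor G
      (fun X => X ≤ Hsub ∧ IsCompact (X : Set G) ∧
        (∃ O : Set G, IsOpen O ∧ (X : Set G) = O ∩ (Hsub : Set G)) ∧
        (X : Set G) ⊆ (Sig : Set G) ∩ (Hsub : Set G))
      ((Sig : Set G) ∩ (Hsub : Set G)) A)
    (FG : CohFunctor G
      (fun U => IsOpen (U : Set G) ∧ IsCompact (U : Set G) ∧ (U : Set G) ⊆ (Sig : Set G))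
      (Sig : Set G) A)
    (hFH : FH.IsCartesian) (hFG : FG.IsCartesian)
    (ι : PushMap Hsub FH FG)
    (u : G) (hu : u ∈ Sig) (huinv : u⁻¹ ∈ Sig)
    (K : Subgroup G) (hKH : K ≤ Hsub) (hKcpt : IsCompact (K : Set G))
    (z : FH.Iw K)
    (τ : G) (hτ : τ⁻¹ ∈ Sig)
    -- the three levels U'' ⊆ U' = U ∩ τUτ⁻¹ ⊆ U
    (U U' U'' : Subgroup G)
    (hU : IsOpen (U : Set G) ∧ IsCompact (U : Set G) ∧ (U : Set G) ⊆ (Sig : Set G))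
    (hU' : IsOpen (U' : Set G) ∧ IsCompact (U' : Set G) ∧ (U' : Set G) ⊆ (Sig : Set G))
    (hU'' : IsOpen (U'' : Set G) ∧ IsCompact (U'' : Set G) ∧ (U'' : Set G) ⊆ (Sig : Set G))
    (hU''U' : U'' ≤ U') (hU'U : U' ≤ U)
    (hU'eq : U' = U ⊓ conjSub τ U)
    (hU''τ : ∀ x ∈ U'', τ⁻¹ * x * τ ∈ U)
    (hconjU : ((conjSub u U : Subgroup G) : Set G) ⊆ (Sig : Set G))
    (hconjU'' : ((conjSub u U'' : Subgroup G) : Set G) ⊆ (Sig : Set G))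
    (hfinU : (K ⊓ conjSub u U).relIndex K ≠ 0)
    (hfinU'' : (K ⊓ conjSub u U'').relIndex K ≠ 0)
    (hXU : (Hsub ⊓ conjSub u U) ≤ Hsub ∧ IsCompact ((Hsub ⊓ conjSub u U : Subgroup G) : Set G) ∧
      (∃ O : Set G, IsOpen O ∧ ((Hsub ⊓ conjSub u U : Subgroup G) : Set G) = O ∩ (Hsub : Set G)) ∧
      ((Hsub ⊓ conjSub u U : Subgroup G) : Set G) ⊆ (Sig : Set G) ∩ (Hsub : Set G))
    (hXU'' : (Hsub ⊓ conjSub u U'') ≤ Hsub ∧ IsCompact ((Hsub ⊓ conjSub u U'' : Subgroup G) : Set G) ∧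
      (∃ O : Set G, IsOpen O ∧ ((Hsub ⊓ conjSub u U'' : Subgroup G) : Set G) = O ∩ (Hsub : Set G)) ∧
      ((Hsub ⊓ conjSub u U'' : Subgroup G) : Set G) ⊆ (Sig : Set G) ∩ (Hsub : Set G))
    -- the finite pullback maps on Iwasawa cohomology (unique, by Statement 1)
    (fpU : FH.Iw K →ₗ[A] FH.Iw (K ⊓ conjSub u U))
    (hfpU : IwFinPullSpec FH K (K ⊓ conjSub u U) fpU)
    (fpU'' : FH.Iw K →ₗ[A] FH.Iw (K ⊓ conjSub u U''))
    (hfpU'' : IwFinPullSpec FH K (K ⊓ conjSub u U'') fpU'')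
    -- hypothesis (i)
    (hi : K ⊓ conjSub u U'' = K ⊓ conjSub u U')
    -- hypothesis (ii)
    (R : Finset G) (hRmem : ∀ γ ∈ R, u * γ * u⁻¹ ∈ K ∧ γ ∈ U)
    (hRcover : ∀ v ∈ U, ∃! γ, γ ∈ R ∧ v * γ⁻¹ ∈ U')
    (hindex : (K ⊓ conjSub u U').relIndex (K ⊓ conjSub u U) = U'.relIndex U)
    -- the conjugated levels V = τ^{-r} U τ^r and V'' = τ^{-(r+1)} U'' τ^{r+1}
    (r : ℕ) (hr : 1 ≤ r)
    (hVSig : ((conjSub (τ⁻¹ ^ r) U : Subgroup G) : Set G) ⊆ (Sig : Set G))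
    (hV''Sig : ((conjSub (τ⁻¹ ^ (r + 1)) U'' : Subgroup G) : Set G) ⊆ (Sig : Set G))
    (hV''V : conjSub (τ⁻¹ ^ (r + 1)) U'' ≤ conjSub (τ⁻¹ ^ r) U) :
    FG.push 1 (conjSub (τ⁻¹ ^ (r + 1)) U'') (conjSub (τ⁻¹ ^ r) U)
        (FG.push (τ ^ (r + 1)) U'' (conjSub (τ⁻¹ ^ (r + 1)) U'')
          (pushClass ι u K U'' hXU'' (inf_le_inf_right _ hKH) fpU'' z)) =
      heckeT FG τ (conjSub (τ⁻¹ ^ r) U)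
        (FG.push (τ ^ r) U (conjSub (τ⁻¹ ^ r) U)
          (pushClass ι u K U hXU (inf_le_inf_right _ hKH) fpU z)) := by
  classical
  by_cases hex : ∃ V₀ : Subgroup G, (V₀ ≤ Hsub ∧ IsCompact (V₀ : Set G) ∧
      (∃ O : Set G, IsOpen O ∧ (V₀ : Set G) = O ∩ (Hsub : Set G)) ∧
      (V₀ : Set G) ⊆ (Sig : Set G) ∩ (Hsub : Set G)) ∧ K ≤ V₀
  swap
  · -- no level contains K, so `z = 0` and everything vanishes
    haveI : IsEmpty {X : Subgroup G // (X ≤ Hsub ∧ IsCompact (X : Set G) ∧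
        (∃ O : Set G, IsOpen O ∧ (X : Set G) = O ∩ (Hsub : Set G)) ∧
        (X : Set G) ⊆ (Sig : Set G) ∩ (Hsub : Set G)) ∧ K ≤ X} :=
      ⟨fun X => hex ⟨X.1, X.2.1, X.2.2⟩⟩
    have hz : z = 0 := Subtype.ext (Subsingleton.elim _ _)
    rw [hz]
    simp [pushClass, heckeT, map_zero]
  obtain ⟨V₀, hPV₀, hKV₀⟩ := hex
  -- basic membership facts
  have hSig1 : (1 : G) ∈ (Sig : Set G) := one_mem Sig
  have hSig1' : ((1 : G))⁻¹ ∈ (Sig : Set G) := by simpa using one_mem Sig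
  have hτpow : ∀ n : ℕ, (τ⁻¹ : G) ^ n ∈ (Sig : Set G) := fun n => pow_mem hτ n
  have hτipow : ∀ n : ℕ, ((τ : G) ^ n)⁻¹ ∈ (Sig : Set G) := fun n => by
    rw [← inv_pow]; exact hτpow n
  have einv : ((τ⁻¹ : G) ^ r)⁻¹ = τ ^ r := by rw [inv_pow, inv_inv]
  -- subgroup inequalities
  have hQU'le : conjSub u U' ≤ conjSub u U := conjSub_mono u hU'U
  have hQU''le' : conjSub u U'' ≤ conjSub u U' := conjSub_mono u hU''U'
  have hU'τ : ∀ y ∈ U', τ⁻¹ * y * τ ∈ U := by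
    intro y hy
    have h2 : y ∈ U ⊓ conjSub τ U := by rw [← hU'eq]; exact hy
    exact mem_conjSub.mp (Subgroup.mem_inf.mp h2).2
  have hXle : conjSub τ⁻¹ U'' ≤ U := by
    intro x hx
    have h2 := hU''τ _ (mem_conjSub.mp hx)
    have e : τ⁻¹ * (τ⁻¹⁻¹ * x * τ⁻¹) * τ = x := by group
    rwa [e] at h2
  have hX'le : conjSub τ⁻¹ U' ≤ U := by
    intro x hx
    have h2 := hU'τ _ (mem_conjSub.mp hx)
    have e : τ⁻¹ * (τ⁻¹⁻¹ * x * τ⁻¹) * τ = x := by group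
    rwa [e] at h2
  have hcomm : τ * τ⁻¹ ^ r = τ⁻¹ ^ r * τ := ((Commute.refl τ).inv_right.pow_right r).eq
  have hW1'le : conjSub (τ⁻¹ ^ (r + 1)) U' ≤ conjSub (τ⁻¹ ^ r) U := by
    have hU'c : U' ≤ conjSub τ U := by rw [hU'eq]; exact inf_le_right
    calc conjSub (τ⁻¹ ^ (r + 1)) U' ≤ conjSub (τ⁻¹ ^ (r + 1)) (conjSub τ U) :=
          conjSub_mono _ hU'c
      _ = conjSub (τ⁻¹ ^ r) U := by rw [conjSub_conjSub, pow_succ, inv_mul_cancel_right]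
  have hWrVr : conjSub (τ⁻¹ ^ r) U' ≤ conjSub (τ⁻¹ ^ r) U := conjSub_mono _ hU'U
  -- P_G facts
  have pgQU : IsOpen ((conjSub u U : Subgroup G) : Set G) ∧
      IsCompact ((conjSub u U : Subgroup G) : Set G) ∧
      ((conjSub u U : Subgroup G) : Set G) ⊆ (Sig : Set G) :=
    ⟨isOpen_conjSub u hU.1, isCompact_conjSub u hU.2.1, hconjU⟩
  have pgQU' : IsOpen ((conjSub u U' : Subgroup G) : Set G) ∧
      IsCompact ((conjSub u U' : Subgroup G) : Set G) ∧
      ((conjSub u U' : Subgroup G) : Set G) ⊆ (Sig : Set G) :=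
    ⟨isOpen_conjSub u hU'.1, isCompact_conjSub u hU'.2.1,
      (SetLike.coe_subset_coe.mpr hQU'le).trans hconjU⟩
  have pgQU'' : IsOpen ((conjSub u U'' : Subgroup G) : Set G) ∧
      IsCompact ((conjSub u U'' : Subgroup G) : Set G) ∧
      ((conjSub u U'' : Subgroup G) : Set G) ⊆ (Sig : Set G) :=
    ⟨isOpen_conjSub u hU''.1, isCompact_conjSub u hU''.2.1, hconjU''⟩
  have pgVr : IsOpen ((conjSub (τ⁻¹ ^ r) U : Subgroup G) : Set G) ∧
      IsCompact ((conjSub (τ⁻¹ ^ r) U : Subgroup G) : Set G) ∧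
      ((conjSub (τ⁻¹ ^ r) U : Subgroup G) : Set G) ⊆ (Sig : Set G) :=
    ⟨isOpen_conjSub _ hU.1, isCompact_conjSub _ hU.2.1, hVSig⟩
  have pgV2 : IsOpen ((conjSub (τ⁻¹ ^ (r + 1)) U'' : Subgroup G) : Set G) ∧
      IsCompact ((conjSub (τ⁻¹ ^ (r + 1)) U'' : Subgroup G) : Set G) ∧
      ((conjSub (τ⁻¹ ^ (r + 1)) U'' : Subgroup G) : Set G) ⊆ (Sig : Set G) :=
    ⟨isOpen_conjSub _ hU''.1, isCompact_conjSub _ hU''.2.1, hV''Sig⟩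
  have pgWr : IsOpen ((conjSub (τ⁻¹ ^ r) U' : Subgroup G) : Set G) ∧
      IsCompact ((conjSub (τ⁻¹ ^ r) U' : Subgroup G) : Set G) ∧
      ((conjSub (τ⁻¹ ^ r) U' : Subgroup G) : Set G) ⊆ (Sig : Set G) :=
    ⟨isOpen_conjSub _ hU'.1, isCompact_conjSub _ hU'.2.1,
      (SetLike.coe_subset_coe.mpr hWrVr).trans hVSig⟩
  have pgW1' : IsOpen ((conjSub (τ⁻¹ ^ (r + 1)) U' : Subgroup G) : Set G) ∧
      IsCompact ((conjSub (τ⁻¹ ^ (r + 1)) U' : Subgroup G) : Set G) ∧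
      ((conjSub (τ⁻¹ ^ (r + 1)) U' : Subgroup G) : Set G) ⊆ (Sig : Set G) :=
    ⟨isOpen_conjSub _ hU'.1, isCompact_conjSub _ hU'.2.1,
      (SetLike.coe_subset_coe.mpr hW1'le).trans hVSig⟩
  -- P_H fact for Hsub ⊓ uU'u⁻¹
  have hQU'Sig : ((conjSub u U' : Subgroup G) : Set G) ⊆ (Sig : Set G) := pgQU'.2.2
  have phHQU' : (Hsub ⊓ conjSub u U') ≤ Hsub ∧
      IsCompact ((Hsub ⊓ conjSub u U' : Subgroup G) : Set G) ∧
      (∃ O : Set G, IsOpen O ∧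
        ((Hsub ⊓ conjSub u U' : Subgroup G) : Set G) = O ∩ (Hsub : Set G)) ∧
      ((Hsub ⊓ conjSub u U' : Subgroup G) : Set G) ⊆ (Sig : Set G) ∩ (Hsub : Set G) := by
    refine ⟨inf_le_left, ?_, ⟨(conjSub u U' : Set G), isOpen_conjSub u hU'.1, ?_⟩, ?_⟩
    · have e : ((Hsub ⊓ conjSub u U' : Subgroup G) : Set G) =
          ((Hsub ⊓ conjSub u U : Subgroup G) : Set G) ∩ ((conjSub u U' : Subgroup G) : Set G) := by
        ext x
        simp only [Subgroup.coe_inf, Set.mem_inter_iff, SetLike.mem_coe]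
        exact ⟨fun h => ⟨⟨h.1, hQU'le h.2⟩, h.2⟩, fun h => ⟨h.1.1, h.2⟩⟩
      rw [e]
      exact hXU.2.1.inter_right (isCompact_conjSub u hU'.2.1).isClosed
    · rw [Subgroup.coe_inf, Set.inter_comm]
    · intro x hx
      rw [Subgroup.coe_inf, Set.mem_inter_iff] at hx
      exact ⟨hQU'Sig hx.2, hx.1⟩
  -- the double coset decomposition from hypothesis (ii)
  have hcov : ∀ v ∈ conjSub u U, ∃ x ∈ conjSub u U', ∃ n, n ∈ K ∧ n ∈ conjSub u U ∧
      v = x * n := by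
    intro v hv
    obtain ⟨γ₀, hγ₀, -⟩ := hRcover (u⁻¹ * v * u) (mem_conjSub.mp hv)
    obtain ⟨hγK, hγU⟩ := hRmem γ₀ hγ₀.1
    refine ⟨v * (u * γ₀ * u⁻¹)⁻¹, ?_, u * γ₀ * u⁻¹, hγK, ?_, by group⟩
    · rw [mem_conjSub]
      have e : u⁻¹ * (v * (u * γ₀ * u⁻¹)⁻¹) * u = (u⁻¹ * v * u) * γ₀⁻¹ := by group
      rw [e]; exact hγ₀.2
    · rw [mem_conjSub]
      have e : u⁻¹ * (u * γ₀ * u⁻¹) * u = γ₀ := by group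
      rw [e]; exact hγU
  -- abbreviate the two classes
  set b'' := pushClass ι u K U'' hXU'' (inf_le_inf_right _ hKH) fpU'' z with hb''def
  set a₀ := pushClass ι u K U hXU (inf_le_inf_right _ hKH) fpU z with ha₀def
  have hb''e : b'' = FG.push u (conjSub u U'') U'' (ι.toFun (conjSub u U'')
      ((fpU'' z).1 ⟨Hsub ⊓ conjSub u U'', hXU'',
        le_trans (inf_le_inf_right _ hKH) le_rfl⟩)) := hb''def
  have ha₀e : a₀ = FG.push u (conjSub u U) U (ι.toFun (conjSub u U)
      ((fpU z).1 ⟨Hsub ⊓ conjSub u U, hXU,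
        le_trans (inf_le_inf_right _ hKH) le_rfl⟩)) := ha₀def
  -- names for the Iwasawa components
  set yU := (fpU z).1 ⟨Hsub ⊓ conjSub u U, hXU,
    le_trans (inf_le_inf_right _ hKH) le_rfl⟩ with hyUdef
  set yU'' := (fpU'' z).1 ⟨Hsub ⊓ conjSub u U'', hXU'',
    le_trans (inf_le_inf_right _ hKH) le_rfl⟩ with hyU''def
  ----------------------------------------------------------------------------
  -- Construction of an adapted pair of levels (V, V') inside H
  ----------------------------------------------------------------------------
  obtain ⟨W', hW'V₀, hW'QU, hW'cpt, hW'open, hW'norm⟩ :=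
    exists_goodW hPV₀.1 hPV₀.2.1 hPV₀.2.2.1 (isOpen_conjSub u hU.1) (isCompact_conjSub u hU.2.1)
  have hW'H : W' ≤ Hsub := hW'V₀.trans hPV₀.1
  have hdecompV : ∀ v ∈ K ⊔ W', ∃ t ∈ K, ∃ w ∈ W', v = t * w := sup_decomp hW'norm hKV₀
  have hdecompV' : ∀ v ∈ (K ⊓ conjSub u U) ⊔ W', ∃ t ∈ K ⊓ conjSub u U, ∃ w ∈ W', v = t * w :=
    sup_decomp hW'norm (inf_le_left.trans hKV₀)
  have hKVb : K ≤ K ⊔ W' := le_sup_left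
  have hNV' : K ⊓ conjSub u U ≤ (K ⊓ conjSub u U) ⊔ W' := le_sup_left
  have hV'Vb : (K ⊓ conjSub u U) ⊔ W' ≤ K ⊔ W' :=
    sup_le (inf_le_left.trans le_sup_left) le_sup_right
  have hV'QU : (K ⊓ conjSub u U) ⊔ W' ≤ conjSub u U := sup_le inf_le_right hW'QU
  have hV'H : (K ⊓ conjSub u U) ⊔ W' ≤ Hsub := sup_le (inf_le_left.trans hKH) hW'H
  have hVbH : K ⊔ W' ≤ Hsub := sup_le hKH hW'H
  have hVbV₀ : K ⊔ W' ≤ V₀ := sup_le hKV₀ hW'V₀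
  have hV'V₀ : (K ⊓ conjSub u U) ⊔ W' ≤ V₀ := sup_le (inf_le_left.trans hKV₀) hW'V₀
  have hV''V' : ((K ⊓ conjSub u U) ⊔ W') ⊓ conjSub u U' ≤ (K ⊓ conjSub u U) ⊔ W' := inf_le_left
  have hV''QU' : ((K ⊓ conjSub u U) ⊔ W') ⊓ conjSub u U' ≤ conjSub u U' := inf_le_right
  have hV''H : ((K ⊓ conjSub u U) ⊔ W') ⊓ conjSub u U' ≤ Hsub := hV''V'.trans hV'H
  -- P_H facts for the new levels
  have phVbPair := PH_of_mul hdecompV hKVb le_sup_right hKH hW'H hKcpt hW'cpt hW'open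
  have phVb : (K ⊔ W') ≤ Hsub ∧ IsCompact ((K ⊔ W' : Subgroup G) : Set G) ∧
      (∃ O : Set G, IsOpen O ∧ ((K ⊔ W' : Subgroup G) : Set G) = O ∩ (Hsub : Set G)) ∧
      ((K ⊔ W' : Subgroup G) : Set G) ⊆ (Sig : Set G) ∩ (Hsub : Set G) :=
    ⟨hVbH, phVbPair.1, phVbPair.2, fun x hx => hPV₀.2.2.2 (hVbV₀ hx)⟩
  have hKQUcpt : IsCompact ((K ⊓ conjSub u U : Subgroup G) : Set G) := by
    rw [Subgroup.coe_inf]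
    exact hKcpt.inter_right (isCompact_conjSub u hU.2.1).isClosed
  have phV'Pair := PH_of_mul hdecompV' hNV' le_sup_right (inf_le_left.trans hKH) hW'H
    hKQUcpt hW'cpt hW'open
  have phV' : ((K ⊓ conjSub u U) ⊔ W') ≤ Hsub ∧
      IsCompact (((K ⊓ conjSub u U) ⊔ W' : Subgroup G) : Set G) ∧
      (∃ O : Set G, IsOpen O ∧
        (((K ⊓ conjSub u U) ⊔ W' : Subgroup G) : Set G) = O ∩ (Hsub : Set G)) ∧
      (((K ⊓ conjSub u U) ⊔ W' : Subgroup G) : Set G) ⊆ (Sig : Set G) ∩ (Hsub : Set G) :=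
    ⟨hV'H, phV'Pair.1, phV'Pair.2, fun x hx => hPV₀.2.2.2 (hV'V₀ hx)⟩
  have phV'' : (((K ⊓ conjSub u U) ⊔ W') ⊓ conjSub u U') ≤ Hsub ∧
      IsCompact ((((K ⊓ conjSub u U) ⊔ W') ⊓ conjSub u U' : Subgroup G) : Set G) ∧
      (∃ O : Set G, IsOpen O ∧
        ((((K ⊓ conjSub u U) ⊔ W') ⊓ conjSub u U' : Subgroup G) : Set G) = O ∩ (Hsub : Set G)) ∧
      ((((K ⊓ conjSub u U) ⊔ W') ⊓ conjSub u U' : Subgroup G) : Set G) ⊆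
        (Sig : Set G) ∩ (Hsub : Set G) := by
    obtain ⟨O', hO', hO'eq⟩ := phV'Pair.2
    refine ⟨hV''H, ?_, ⟨O' ∩ (conjSub u U' : Set G), hO'.inter (isOpen_conjSub u hU'.1), ?_⟩,
      fun x hx => hPV₀.2.2.2 ((hV''V'.trans hV'V₀) hx)⟩
    · rw [Subgroup.coe_inf]
      exact phV'Pair.1.inter_right (isCompact_conjSub u hU'.2.1).isClosed
    · rw [Subgroup.coe_inf, hO'eq]
      ext x
      simp only [Set.mem_inter_iff]
      tauto
  -- the adapted-pair conditions
  have hV'K : ((K ⊓ conjSub u U) ⊔ W') ⊓ K = K ⊓ conjSub u U := by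
    apply le_antisymm
    · intro x hx
      obtain ⟨h1, h2⟩ := Subgroup.mem_inf.mp hx
      exact Subgroup.mem_inf.mpr ⟨h2, hV'QU h1⟩
    · exact le_inf hNV' inf_le_left
  have hrel1 : ((K ⊓ conjSub u U) ⊔ W').relIndex (K ⊔ W') = (K ⊓ conjSub u U).relIndex K := by
    have h := relindex_eq_of_cover (S' := (K ⊓ conjSub u U) ⊔ W') hKVb (by
      intro v hv
      obtain ⟨t, ht, w, hw, he⟩ := hdecompV v hv
      exact ⟨t, ht, w, (le_sup_right : W' ≤ (K ⊓ conjSub u U) ⊔ W') hw, he⟩)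
    rw [hV'K] at h
    exact h
  have hcovV' : ∀ v ∈ (K ⊓ conjSub u U) ⊔ W', ∃ t ∈ K ⊓ conjSub u U,
      ∃ s ∈ ((K ⊓ conjSub u U) ⊔ W') ⊓ conjSub u U', v = t * s := by
    intro v hv
    obtain ⟨x, hxQU', n, hnK, hnQU, he⟩ := hcov v⁻¹ (inv_mem (hV'QU hv))
    have hnN : n ∈ K ⊓ conjSub u U := Subgroup.mem_inf.mpr ⟨hnK, hnQU⟩
    have hxV' : x ∈ (K ⊓ conjSub u U) ⊔ W' := by
      have ex : x = v⁻¹ * n⁻¹ := by rw [he]; group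
      rw [ex]
      exact mul_mem (inv_mem hv) (inv_mem (hNV' hnN))
    refine ⟨n⁻¹, inv_mem hnN, x⁻¹, inv_mem (Subgroup.mem_inf.mpr ⟨hxV', hxQU'⟩), ?_⟩
    calc v = (v⁻¹)⁻¹ := (inv_inv v).symm
      _ = (x * n)⁻¹ := by rw [he]
      _ = n⁻¹ * x⁻¹ := by rw [mul_inv_rev]
  have hV''N : (((K ⊓ conjSub u U) ⊔ W') ⊓ conjSub u U') ⊓ (K ⊓ conjSub u U) =
      K ⊓ conjSub u U'' := by
    apply le_antisymm
    · intro x hx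
      obtain ⟨hx1, hx2⟩ := Subgroup.mem_inf.mp hx
      rw [hi]
      exact Subgroup.mem_inf.mpr ⟨(Subgroup.mem_inf.mp hx2).1, hV''QU' hx1⟩
    · intro x hx
      rw [hi] at hx
      obtain ⟨hxK, hxQU'⟩ := Subgroup.mem_inf.mp hx
      have hxN : x ∈ K ⊓ conjSub u U := Subgroup.mem_inf.mpr ⟨hxK, hQU'le hxQU'⟩
      exact Subgroup.mem_inf.mpr ⟨Subgroup.mem_inf.mpr ⟨hNV' hxN, hxQU'⟩, hxN⟩
  have hrel2 : (((K ⊓ conjSub u U) ⊔ W') ⊓ conjSub u U').relIndex ((K ⊓ conjSub u U) ⊔ W') =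
      (K ⊓ conjSub u U'').relIndex (K ⊓ conjSub u U) := by
    have h := relindex_eq_of_cover (S' := ((K ⊓ conjSub u U) ⊔ W') ⊓ conjSub u U') hNV' hcovV'
    rw [hV''N] at h
    exact h
  have hle'' : K ⊓ conjSub u U'' ≤ K ⊓ conjSub u U := by
    rw [hi]; exact inf_le_inf_left K hQU'le
  have hrel3 : (((K ⊓ conjSub u U) ⊔ W') ⊓ conjSub u U').relIndex (K ⊔ W') =
      (K ⊓ conjSub u U'').relIndex K := by
    have t1 := Subgroup.relIndex_mul_relIndex (((K ⊓ conjSub u U) ⊔ W') ⊓ conjSub u U')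
      ((K ⊓ conjSub u U) ⊔ W') (K ⊔ W') hV''V' hV'Vb
    have t2 := Subgroup.relIndex_mul_relIndex (K ⊓ conjSub u U'') (K ⊓ conjSub u U) K
      hle'' inf_le_left
    rw [← t1, hrel2, hrel1, t2]
  -- spec of the finite pullbacks
  have hwV' : (fpU z).1 ⟨(K ⊓ conjSub u U) ⊔ W', phV', hNV'⟩ =
      FH.pull 1 ((K ⊓ conjSub u U) ⊔ W') (K ⊔ W') (z.1 ⟨K ⊔ W', phVb, hKVb⟩) :=
    hfpU (K ⊔ W') ((K ⊓ conjSub u U) ⊔ W') phVb phV' hKVb hNV' hV'Vb hV'K hrel1 z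
  have hK''V'' : K ⊓ conjSub u U'' ≤ ((K ⊓ conjSub u U) ⊔ W') ⊓ conjSub u U' := by
    rw [hi]
    exact le_inf ((inf_le_inf_left K hQU'le).trans hNV') inf_le_right
  have hV''K : (((K ⊓ conjSub u U) ⊔ W') ⊓ conjSub u U') ⊓ K = K ⊓ conjSub u U'' := by
    apply le_antisymm
    · intro x hx
      obtain ⟨hx1, hxK⟩ := Subgroup.mem_inf.mp hx
      rw [hi]
      exact Subgroup.mem_inf.mpr ⟨hxK, hV''QU' hx1⟩
    · exact le_inf hK''V'' (by rw [hi]; exact inf_le_left)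
  have hw''V'' : (fpU'' z).1 ⟨((K ⊓ conjSub u U) ⊔ W') ⊓ conjSub u U', phV'', hK''V''⟩ =
      FH.pull 1 (((K ⊓ conjSub u U) ⊔ W') ⊓ conjSub u U') (K ⊔ W')
        (z.1 ⟨K ⊔ W', phVb, hKVb⟩) :=
    hfpU'' (K ⊔ W') (((K ⊓ conjSub u U) ⊔ W') ⊓ conjSub u U') phVb phV'' hKVb hK''V''
      (hV''V'.trans hV'Vb) hV''K hrel3 z
  -- Iwasawa compatibilities
  have hK''HQU' : K ⊓ conjSub u U'' ≤ Hsub ⊓ conjSub u U' := by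
    rw [hi]; exact inf_le_inf hKH le_rfl
  have hIw1 : FH.push 1 ((K ⊓ conjSub u U) ⊔ W') (Hsub ⊓ conjSub u U)
      ((fpU z).1 ⟨(K ⊓ conjSub u U) ⊔ W', phV', hNV'⟩) = yU :=
    (fpU z).2 ⟨(K ⊓ conjSub u U) ⊔ W', phV', hNV'⟩
      ⟨Hsub ⊓ conjSub u U, hXU, le_trans (inf_le_inf_right _ hKH) le_rfl⟩
      (le_inf hV'H hV'QU)
  have hIw3 : FH.push 1 (((K ⊓ conjSub u U) ⊔ W') ⊓ conjSub u U') (Hsub ⊓ conjSub u U')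
      ((fpU'' z).1 ⟨((K ⊓ conjSub u U) ⊔ W') ⊓ conjSub u U', phV'', hK''V''⟩) =
      (fpU'' z).1 ⟨Hsub ⊓ conjSub u U', phHQU', hK''HQU'⟩ :=
    (fpU'' z).2 ⟨((K ⊓ conjSub u U) ⊔ W') ⊓ conjSub u U', phV'', hK''V''⟩
      ⟨Hsub ⊓ conjSub u U', phHQU', hK''HQU'⟩ (le_inf hV''H hV''QU')
  have hIw2 : FH.push 1 (Hsub ⊓ conjSub u U'') (Hsub ⊓ conjSub u U') yU'' =
      (fpU'' z).1 ⟨Hsub ⊓ conjSub u U', phHQU', hK''HQU'⟩ :=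
    (fpU'' z).2 ⟨Hsub ⊓ conjSub u U'', hXU'', le_trans (inf_le_inf_right _ hKH) le_rfl⟩
      ⟨Hsub ⊓ conjSub u U', phHQU', hK''HQU'⟩ (inf_le_inf_left Hsub hQU''le')
  -- Mackey formula (Cartesian property of M_H) with a single double coset
  have hV''inf : conjSub 1 ((K ⊓ conjSub u U) ⊔ W') ⊓ (Hsub ⊓ conjSub u U') =
      ((K ⊓ conjSub u U) ⊔ W') ⊓ conjSub u U' := by
    rw [conjSub_one]
    apply le_antisymm
    · intro x hx
      obtain ⟨h1, h2⟩ := Subgroup.mem_inf.mp hx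
      exact Subgroup.mem_inf.mpr ⟨h1, (Subgroup.mem_inf.mp h2).2⟩
    · intro x hx
      obtain ⟨h1, h2⟩ := Subgroup.mem_inf.mp hx
      exact Subgroup.mem_inf.mpr ⟨h1, Subgroup.mem_inf.mpr ⟨hV'H h1, h2⟩⟩
  have hMcover : ∀ v ∈ Hsub ⊓ conjSub u U, ∃ γ ∈ ({1} : Finset G),
      ∃ x ∈ Hsub ⊓ conjSub u U', ∃ y ∈ (K ⊓ conjSub u U) ⊔ W', v = x * γ * y := by
    intro v hv
    obtain ⟨hvH, hvQU⟩ := Subgroup.mem_inf.mp hv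
    obtain ⟨x, hxQU', n, hnK, hnQU, he⟩ := hcov v hvQU
    have hxH : x ∈ Hsub := by
      have ex : x = v * n⁻¹ := by rw [he]; group
      rw [ex]
      exact mul_mem hvH (inv_mem (hKH hnK))
    exact ⟨1, Finset.mem_singleton_self 1, x, Subgroup.mem_inf.mpr ⟨hxH, hxQU'⟩, n,
      hNV' (Subgroup.mem_inf.mpr ⟨hnK, hnQU⟩), by rw [mul_one]; exact he⟩
  have hMack := hFH (Hsub ⊓ conjSub u U') ((K ⊓ conjSub u U) ⊔ W') (Hsub ⊓ conjSub u U)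
    phHQU' phV' hXU (inf_le_inf_left Hsub hQU'le) (le_inf hV'H hV'QU) {1}
    (by
      intro γ hγ
      rw [Finset.coe_singleton, Set.mem_singleton_iff] at hγ
      rw [hγ]
      exact SetLike.mem_coe.mpr (one_mem _))
    hMcover
    (fun γ hγ γ' hγ' _ => by
      rw [Finset.mem_singleton] at hγ hγ'
      rw [hγ, hγ'])
  rw [Finset.sum_singleton, hV''inf] at hMack
  have hMackE := LinearMap.congr_fun hMack ((fpU z).1 ⟨(K ⊓ conjSub u U) ⊔ W', phV', hNV'⟩)
  simp only [LinearMap.comp_apply] at hMackE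
  -- combine the two pullbacks on the H-side
  have hpp := LinearMap.congr_fun (FH.pull_comp 1 1
    (((K ⊓ conjSub u U) ⊔ W') ⊓ conjSub u U') ((K ⊓ conjSub u U) ⊔ W') (K ⊔ W')
    phV'' phV' phVb ⟨hSig1, one_mem Hsub⟩ ⟨hSig1, one_mem Hsub⟩
    (fun x hx => by simpa using hV''V' hx)
    (fun x hx => by simpa using hV'Vb hx)) (z.1 ⟨K ⊔ W', phVb, hKVb⟩)
  simp only [LinearMap.comp_apply] at hpp
  rw [mul_one] at hpp
  -- the core norm-compatibility on the H-side
  have hcore : FH.pull 1 (Hsub ⊓ conjSub u U') (Hsub ⊓ conjSub u U) yU =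
      FH.push 1 (Hsub ⊓ conjSub u U'') (Hsub ⊓ conjSub u U') yU'' := by
    calc FH.pull 1 (Hsub ⊓ conjSub u U') (Hsub ⊓ conjSub u U) yU
        = FH.pull 1 (Hsub ⊓ conjSub u U') (Hsub ⊓ conjSub u U)
            (FH.push 1 ((K ⊓ conjSub u U) ⊔ W') (Hsub ⊓ conjSub u U)
              ((fpU z).1 ⟨(K ⊓ conjSub u U) ⊔ W', phV', hNV'⟩)) := by rw [hIw1]
      _ = FH.push 1 (((K ⊓ conjSub u U) ⊔ W') ⊓ conjSub u U') (Hsub ⊓ conjSub u U')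
            (FH.pull 1 (((K ⊓ conjSub u U) ⊔ W') ⊓ conjSub u U') ((K ⊓ conjSub u U) ⊔ W')
              ((fpU z).1 ⟨(K ⊓ conjSub u U) ⊔ W', phV', hNV'⟩)) := hMackE
      _ = FH.push 1 (((K ⊓ conjSub u U) ⊔ W') ⊓ conjSub u U') (Hsub ⊓ conjSub u U')
            (FH.pull 1 (((K ⊓ conjSub u U) ⊔ W') ⊓ conjSub u U') (K ⊔ W')
              (z.1 ⟨K ⊔ W', phVb, hKVb⟩)) := by rw [hwV', hpp]
      _ = FH.push 1 (((K ⊓ conjSub u U) ⊔ W') ⊓ conjSub u U') (Hsub ⊓ conjSub u U')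
            ((fpU'' z).1 ⟨((K ⊓ conjSub u U) ⊔ W') ⊓ conjSub u U', phV'', hK''V''⟩) := by
              rw [← hw''V'']
      _ = (fpU'' z).1 ⟨Hsub ⊓ conjSub u U', phHQU', hK''HQU'⟩ := hIw3
      _ = FH.push 1 (Hsub ⊓ conjSub u U'') (Hsub ⊓ conjSub u U') yU'' := hIw2.symm
  ----------------------------------------------------------------------------
  -- The G-side comparison of levels  (Statement 8)
  ----------------------------------------------------------------------------
  have h_push_u : FG.push u (conjSub u U) U = FG.pull u⁻¹ U (conjSub u U) := by
    have h := FG.pull_eq_push u⁻¹ U (conjSub u U) hU pgQU huinv (by rw [inv_inv])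
    rw [inv_inv] at h
    exact h.symm
  have h_pull_u' : FG.pull u⁻¹ U' (conjSub u U') = FG.push u (conjSub u U') U' := by
    have h := FG.pull_eq_push u⁻¹ U' (conjSub u U') hU' pgQU' huinv (by rw [inv_inv])
    rw [inv_inv] at h
    exact h
  have hS2 : FG.pull 1 (conjSub u U') (conjSub u U)
      (ι.toFun (conjSub u U) yU) = ι.toFun (conjSub u U')
        (FH.pull 1 (Hsub ⊓ conjSub u U') (Hsub ⊓ conjSub u U) yU) := by
    have hcpl := ι.compat_pull (conjSub u U') (conjSub u U) pgQU' pgQU hQU'le {1}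
      (by
        intro γ hγ
        rw [Finset.coe_singleton, Set.mem_singleton_iff] at hγ
        rw [hγ]
        exact SetLike.mem_coe.mpr (one_mem _))
      (by
        intro v hv
        obtain ⟨x, hx, n, hnK, hnQU, he⟩ := hcov v hv
        exact ⟨1, Finset.mem_singleton_self 1, x, hx, n, hKH hnK, hnQU,
          by rw [mul_one]; exact he⟩)
      (fun γ hγ γ' hγ' _ => by
        rw [Finset.mem_singleton] at hγ hγ'
        rw [hγ, hγ'])
    rw [Finset.sum_singleton, inv_one, conjSub_one, inf_eq_left.mpr hQU'le,
      FG.push_id _ pgQU', LinearMap.id_comp] at hcpl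
    have h := LinearMap.congr_fun hcpl yU
    simp only [LinearMap.comp_apply] at h
    exact h
  have hS3 : FG.push 1 (conjSub u U'') (conjSub u U') (ι.toFun (conjSub u U'') yU'') =
      ι.toFun (conjSub u U')
        (FH.push 1 (Hsub ⊓ conjSub u U'') (Hsub ⊓ conjSub u U') yU'') := by
    have hcp := ι.compat_push 1 (one_mem Hsub) hSig1' ⟨hSig1', by simpa using one_mem Hsub⟩
      (conjSub u U'') (conjSub u U') pgQU'' pgQU'
      (fun x hx => by simpa using hQU''le' hx)
    have h := LinearMap.congr_fun hcp yU''
    simp only [LinearMap.comp_apply] at h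
    exact h
  have h8 : FG.pull 1 U' U a₀ = FG.push 1 U'' U' b'' := by
    rw [ha₀e, hb''e, h_push_u]
    have h1 := LinearMap.congr_fun (FG.pull_comp 1 u⁻¹ U' U (conjSub u U) hU' hU pgQU
      hSig1 huinv (fun x hx => by simpa using hU'U hx)
      (conj_maps_to (by rw [inv_inv]))) (ι.toFun (conjSub u U) yU)
    simp only [LinearMap.comp_apply] at h1
    rw [one_mul] at h1
    rw [h1]
    have h2 := LinearMap.congr_fun (FG.pull_comp u⁻¹ 1 U' (conjSub u U') (conjSub u U)
      hU' pgQU' pgQU huinv hSig1 (conj_maps_to (by rw [inv_inv]))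
      (fun x hx => by simpa using hQU'le hx)) (ι.toFun (conjSub u U) yU)
    simp only [LinearMap.comp_apply] at h2
    rw [mul_one] at h2
    rw [← h2, h_pull_u', hS2]
    have h3 := LinearMap.congr_fun (FG.push_comp u 1 (conjSub u U'') U'' U'
      pgQU'' hU'' hU' huinv hSig1' (fun x hx => mem_conjSub.mp hx)
      (fun x hx => by simpa using hU''U' hx)) (ι.toFun (conjSub u U'') yU'')
    simp only [LinearMap.comp_apply] at h3
    rw [mul_one] at h3
    rw [h3]
    have h4 := LinearMap.congr_fun (FG.push_comp 1 u (conjSub u U'') (conjSub u U') U'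
      pgQU'' pgQU' hU' hSig1' huinv (fun x hx => by simpa using hQU''le' hx)
      (fun x hx => mem_conjSub.mp hx)) (ι.toFun (conjSub u U'') yU'')
    simp only [LinearMap.comp_apply] at h4
    rw [one_mul] at h4
    rw [← h4, hS3]
    exact congrArg _ (congrArg _ hcore)
  have hmain : FG.push τ U'' U b'' = FG.push τ U' U (FG.pull 1 U' U a₀) := by
    rw [h8]
    have h := LinearMap.congr_fun (FG.push_comp 1 τ U'' U' U hU'' hU' hU hSig1' hτ
      (fun x hx => by simpa using hU''U' hx) (conj_maps_to hX'le)) b''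
    simp only [LinearMap.comp_apply] at h
    rw [one_mul] at h
    exact h.symm
  ----------------------------------------------------------------------------
  -- The conjugated-level computation
  ----------------------------------------------------------------------------
  have hL1 : ∀ d : FG.M U'', FG.push 1 (conjSub (τ⁻¹ ^ (r + 1)) U'') (conjSub (τ⁻¹ ^ r) U)
      (FG.push (τ ^ (r + 1)) U'' (conjSub (τ⁻¹ ^ (r + 1)) U'') d) =
      FG.push (τ ^ (r + 1)) U'' (conjSub (τ⁻¹ ^ r) U) d := by
    intro d
    have h := LinearMap.congr_fun (FG.push_comp (τ ^ (r + 1)) 1 U''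
      (conjSub (τ⁻¹ ^ (r + 1)) U'') (conjSub (τ⁻¹ ^ r) U) hU'' pgV2 pgVr
      (hτipow (r + 1)) hSig1' (conj_maps_to (by rw [← inv_pow]))
      (fun x hx => by simpa using hV''V hx)) d
    simp only [LinearMap.comp_apply] at h
    rw [mul_one] at h
    exact h
  have hL2 : ∀ d : FG.M U'', FG.push (τ ^ (r + 1)) U'' (conjSub (τ⁻¹ ^ r) U) d =
      FG.push (τ ^ r) U (conjSub (τ⁻¹ ^ r) U) (FG.push τ U'' U d) := by
    intro d
    have h := LinearMap.congr_fun (FG.push_comp τ (τ ^ r) U'' U (conjSub (τ⁻¹ ^ r) U)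
      hU'' hU pgVr hτ (hτipow r) (conj_maps_to hXle)
      (conj_maps_to (by rw [← inv_pow]))) d
    simp only [LinearMap.comp_apply] at h
    rw [← pow_succ'] at h
    exact h.symm
  have hR1a : FG.push (τ ^ r) U (conjSub (τ⁻¹ ^ r) U) =
      FG.pull (τ⁻¹ ^ r) (conjSub (τ⁻¹ ^ r) U) U := by
    have h := FG.pull_eq_push (τ⁻¹ ^ r) (conjSub (τ⁻¹ ^ r) U) U pgVr hU (hτpow r)
      (by rw [conjSub_conjSub, inv_mul_cancel, conjSub_one])
    rw [einv] at h
    exact h.symm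
  have hR1b : FG.pull (τ⁻¹ ^ r) (conjSub (τ⁻¹ ^ r) U') U' =
      FG.push (τ ^ r) U' (conjSub (τ⁻¹ ^ r) U') := by
    have h := FG.pull_eq_push (τ⁻¹ ^ r) (conjSub (τ⁻¹ ^ r) U') U' pgWr hU' (hτpow r)
      (by rw [conjSub_conjSub, inv_mul_cancel, conjSub_one])
    rw [einv] at h
    exact h
  have hR1 : ∀ d : FG.M U, FG.pull 1 (conjSub (τ⁻¹ ^ r) U') (conjSub (τ⁻¹ ^ r) U)
      (FG.push (τ ^ r) U (conjSub (τ⁻¹ ^ r) U) d) =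
      FG.push (τ ^ r) U' (conjSub (τ⁻¹ ^ r) U') (FG.pull 1 U' U d) := by
    intro d
    rw [hR1a]
    have h1 := LinearMap.congr_fun (FG.pull_comp 1 (τ⁻¹ ^ r) (conjSub (τ⁻¹ ^ r) U')
      (conjSub (τ⁻¹ ^ r) U) U pgWr pgVr hU hSig1 (hτpow r)
      (fun x hx => by simpa using hWrVr hx)
      (fun x hx => mem_conjSub.mp hx)) d
    simp only [LinearMap.comp_apply] at h1
    rw [one_mul] at h1
    rw [h1]
    have h2 := LinearMap.congr_fun (FG.pull_comp (τ⁻¹ ^ r) 1 (conjSub (τ⁻¹ ^ r) U') U' U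
      pgWr hU' hU (hτpow r) hSig1 (fun x hx => mem_conjSub.mp hx)
      (fun x hx => by simpa using hU'U hx)) d
    simp only [LinearMap.comp_apply] at h2
    rw [mul_one] at h2
    rw [← h2, hR1b]
  have hR2 : ∀ d : FG.M U', FG.push τ (conjSub (τ⁻¹ ^ r) U') (conjSub (τ⁻¹ ^ (r + 1)) U')
      (FG.push (τ ^ r) U' (conjSub (τ⁻¹ ^ r) U') d) =
      FG.push (τ ^ (r + 1)) U' (conjSub (τ⁻¹ ^ (r + 1)) U') d := by
    intro d
    have h := LinearMap.congr_fun (FG.push_comp (τ ^ r) τ U' (conjSub (τ⁻¹ ^ r) U')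
      (conjSub (τ⁻¹ ^ (r + 1)) U') hU' pgWr pgW1' (hτipow r) hτ
      (conj_maps_to (by rw [← inv_pow]))
      (conj_maps_to (by rw [conjSub_conjSub, ← pow_succ']))) d
    simp only [LinearMap.comp_apply] at h
    rw [← pow_succ] at h
    exact h
  have hR3 : ∀ d : FG.M U', FG.push 1 (conjSub (τ⁻¹ ^ (r + 1)) U') (conjSub (τ⁻¹ ^ r) U)
      (FG.push (τ ^ (r + 1)) U' (conjSub (τ⁻¹ ^ (r + 1)) U') d) =
      FG.push (τ ^ (r + 1)) U' (conjSub (τ⁻¹ ^ r) U) d := by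
    intro d
    have h := LinearMap.congr_fun (FG.push_comp (τ ^ (r + 1)) 1 U'
      (conjSub (τ⁻¹ ^ (r + 1)) U') (conjSub (τ⁻¹ ^ r) U) hU' pgW1' pgVr
      (hτipow (r + 1)) hSig1' (conj_maps_to (by rw [← inv_pow]))
      (fun x hx => by simpa using hW1'le hx)) d
    simp only [LinearMap.comp_apply] at h
    rw [mul_one] at h
    exact h
  have hR4 : ∀ d : FG.M U', FG.push (τ ^ (r + 1)) U' (conjSub (τ⁻¹ ^ r) U) d =
      FG.push (τ ^ r) U (conjSub (τ⁻¹ ^ r) U) (FG.push τ U' U d) := by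
    intro d
    have h := LinearMap.congr_fun (FG.push_comp τ (τ ^ r) U' U (conjSub (τ⁻¹ ^ r) U)
      hU' hU pgVr hτ (hτipow r) (conj_maps_to hX'le)
      (conj_maps_to (by rw [← inv_pow]))) d
    simp only [LinearMap.comp_apply] at h
    rw [← pow_succ'] at h
    exact h.symm
  -- identify the Hecke-operator levels
  have hWeq : conjSub (τ⁻¹ ^ r) U ⊓ conjSub τ (conjSub (τ⁻¹ ^ r) U) =
      conjSub (τ⁻¹ ^ r) U' := by
    rw [hU'eq, conjSub_inf, conjSub_conjSub, conjSub_conjSub, hcomm]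
  have hW1eq : conjSub τ⁻¹ (conjSub (τ⁻¹ ^ r) U') = conjSub (τ⁻¹ ^ (r + 1)) U' := by
    rw [conjSub_conjSub, ← pow_succ']
  simp only [heckeT, LinearMap.comp_apply]
  rw [hWeq, hW1eq]
  rw [hL1, hL2, hR1, hR2, hR3, hR4]
  exact congrArg _ hmain
end
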